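/- For every z = (z_1, …, z_d) ∈ T_L and every coordinate direction i ∈ {1, …, d}, the spin–spin correlation satisfies ⟨φ_o · φ_z⟩_{L,N,β} ≤ ⟨φ_o · φ_{z_i e_i}⟩_{L,N,β}, where z_i e_i is the projection of z onto the i-th cartesian axis. -/

import Mathlib

open MeasureTheory Metric
open scoped RealInnerProductSpace BigOperators

/-- Vertices of the torus `(ℤ/Lℤ)^d`. -/
abbrev TorusPt (d L : ℕ) := Fin d → ZMod L

/-- Nearest-neighbour adjacency on the torus: `x` and `y` differ by `±1 (mod L)`
in exactly one coordinate. -/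
def torusAdj {d L : ℕ} (x y : TorusPt d L) : Prop :=
  ∃ j : Fin d, y = Function.update x j (x j + 1) ∨ y = Function.update x j (x j - 1)

instance {d L : ℕ} (x y : TorusPt d L) : Decidable (torusAdj x y) := by
  unfold torusAdj; infer_instance

/-- The unit sphere `S^{N-1} ⊂ ℝ^N`. -/
abbrev SpinSphere (N : ℕ) := sphere (0 : EuclideanSpace ℝ (Fin N)) 1

/-- A spin configuration on the torus. -/
abbrev SpinCfg (d L N : ℕ) := TorusPt d L → SpinSphere N

/-- The uniform probability measure on the unit sphere `S^{N-1}`. -/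
noncomputable def sphereUniform (N : ℕ) : Measure (SpinSphere N) :=
  ((volume : Measure (EuclideanSpace ℝ (Fin N))).toSphere Set.univ)⁻¹ •
    (volume : Measure (EuclideanSpace ℝ (Fin N))).toSphere

/-- The product over vertices of the uniform probability measures on the sphere. -/
noncomputable def spinMeasure (d L N : ℕ) [NeZero L] : Measure (SpinCfg d L N) :=
  Measure.pi fun _ : TorusPt d L => sphereUniform N

/-- The Hamiltonian `H(φ) = -∑_{{x,y} edge} φ_x · φ_y`; every unordered
nearest-neighbour edge appears exactly twice in the double sum below. -/
noncomputable def hamiltonian {d L N : ℕ} [NeZero L] (φ : SpinCfg d L N) : ℝ :=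
  -(1 / 2) * ∑ x : TorusPt d L, ∑ y : TorusPt d L,
    if torusAdj x y then
      ⟪(φ x : EuclideanSpace ℝ (Fin N)), (φ y : EuclideanSpace ℝ (Fin N))⟫
    else 0

/-- The Gibbs expectation `⟨f⟩_{L,N,β}`. -/
noncomputable def gibbsExp (d L N : ℕ) [NeZero L] (β : ℝ) (f : SpinCfg d L N → ℝ) : ℝ :=
  (∫ φ, Real.exp (-β * hamiltonian φ) ∂(spinMeasure d L N))⁻¹ *
    ∫ φ, f φ * Real.exp (-β * hamiltonian φ) ∂(spinMeasure d L N)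

/-- The spin-spin correlation `⟨φ_x ⬝ φ_y⟩_{L,N,β}`. -/
noncomputable def corrDot (d L N : ℕ) [NeZero L] (β : ℝ) (x y : TorusPt d L) : ℝ :=
  gibbsExp d L N β fun φ =>
    ⟪(φ x : EuclideanSpace ℝ (Fin N)), (φ y : EuclideanSpace ℝ (Fin N))⟫

/-- The correlation `⟨φ_x^1 φ_y^1⟩_{L,N,β}` of first components. -/
noncomputable def corrOne (d L N : ℕ) [NeZero L] [NeZero N] (β : ℝ) (x y : TorusPt d L) : ℝ :=
  gibbsExp d L N β fun φ =>
    (φ x : EuclideanSpace ℝ (Fin N)) 0 * (φ y : EuclideanSpace ℝ (Fin N)) 0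

/-- The origin of the torus. -/
def torusOrigin (d L : ℕ) : TorusPt d L := fun _ => 0

/-- The point `n • e_i` on the `i`-th cartesian axis. -/
def axisPt (d L : ℕ) (i : Fin d) (n : ℕ) : TorusPt d L :=
  fun k => if k = i then (n : ZMod L) else 0

/-- The sup torus norm `‖z‖_∞ = max_i min(z_i, L - z_i)`. -/
def tnormInf {d L : ℕ} (z : TorusPt d L) : ℕ :=
  Finset.univ.sup fun i : Fin d => min (z i).val (L - (z i).val)

/-! ### Auxiliary development: reflection positivity for the spin O(N) model. -/

namespace RPAux

/-! #### One-dimensional side predicates on `ZMod L` for the reflection `t ↦ c - t`. -/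

section OneD

variable {L : ℕ} [NeZero L]

/-- closed plus side -/
def cpS (c t : ZMod L) : Prop := 2 * t.val ≤ c.val ∨ c.val + L ≤ 2 * t.val

/-- closed minus side -/
def cmS (c t : ZMod L) : Prop := c.val ≤ 2 * t.val ∧ 2 * t.val ≤ c.val + L

/-- plane (fixed points) -/
def pplS (c t : ZMod L) : Prop := 2 * t.val = c.val ∨ 2 * t.val = c.val + L

/-- strict plus side -/
def plsS (c t : ZMod L) : Prop := 2 * t.val < c.val ∨ c.val + L < 2 * t.val

/-- strict minus side -/
def mnsS (c t : ZMod L) : Prop := c.val < 2 * t.val ∧ 2 * t.val < c.val + L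

instance (c t : ZMod L) : Decidable (cpS c t) := by unfold cpS; infer_instance
instance (c t : ZMod L) : Decidable (cmS c t) := by unfold cmS; infer_instance
instance (c t : ZMod L) : Decidable (pplS c t) := by unfold pplS; infer_instance
instance (c t : ZMod L) : Decidable (plsS c t) := by unfold plsS; infer_instance
instance (c t : ZMod L) : Decidable (mnsS c t) := by unfold mnsS; infer_instance

lemma mod_two_cases {m M : ℕ} (hM : 0 < M) (h : m < 2 * M) :
    m % M = if m < M then m else m - M := by
  split_ifs with h1
  · exact Nat.mod_eq_of_lt h1
  · rw [Nat.mod_eq_sub_mod (le_of_not_gt h1)]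
    exact Nat.mod_eq_of_lt (by omega)

lemma Lpos : 0 < L := Nat.pos_of_ne_zero (NeZero.ne L)

lemma r_val (c t : ZMod L) :
    (c - t).val + t.val = c.val ∨ (c - t).val + t.val = c.val + L := by
  have h : (c - t) + t = c := by ring
  have h2 := congrArg ZMod.val h
  rw [ZMod.val_add] at h2
  have l1 := ZMod.val_lt (c - t); have l2 := ZMod.val_lt t; have l3 := ZMod.val_lt c
  rw [mod_two_cases Lpos (by omega)] at h2
  split_ifs at h2 <;> omega

lemma eq_pair_iff (c t u : ZMod L) :
    u = c - t ↔ (u.val + t.val = c.val ∨ u.val + t.val = c.val + L) := by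
  have l1 := ZMod.val_lt u; have l2 := ZMod.val_lt t; have l3 := ZMod.val_lt c
  rw [eq_sub_iff_add_eq]
  constructor
  · intro h
    have h2 := congrArg ZMod.val h
    rw [ZMod.val_add, mod_two_cases Lpos (by omega)] at h2
    split_ifs at h2 <;> omega
  · intro h
    have : (u + t).val = c.val := by
      rw [ZMod.val_add, mod_two_cases Lpos (by omega)]
      split_ifs <;> omega
    exact ZMod.val_injective L this

lemma ppl_sub (c t : ZMod L) : pplS c (c - t) ↔ pplS c t := by
  have h := r_val c t
  have l1 := ZMod.val_lt (c - t); have l2 := ZMod.val_lt t; have l3 := ZMod.val_lt c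
  unfold pplS; omega

lemma pls_sub (c t : ZMod L) : plsS c (c - t) ↔ mnsS c t := by
  have h := r_val c t
  have l1 := ZMod.val_lt (c - t); have l2 := ZMod.val_lt t; have l3 := ZMod.val_lt c
  unfold plsS mnsS; omega

lemma mns_sub (c t : ZMod L) : mnsS c (c - t) ↔ plsS c t := by
  have h := r_val c t
  have l1 := ZMod.val_lt (c - t); have l2 := ZMod.val_lt t; have l3 := ZMod.val_lt c
  unfold plsS mnsS; omega

lemma cp_sub (c t : ZMod L) : cpS c (c - t) ↔ cmS c t := by
  have h := r_val c t
  have l1 := ZMod.val_lt (c - t); have l2 := ZMod.val_lt t; have l3 := ZMod.val_lt c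
  unfold cpS cmS; omega

lemma cm_sub (c t : ZMod L) : cmS c (c - t) ↔ cpS c t := by
  have h := r_val c t
  have l1 := ZMod.val_lt (c - t); have l2 := ZMod.val_lt t; have l3 := ZMod.val_lt c
  unfold cpS cmS; omega

lemma ppl_fixed (c t : ZMod L) : pplS c t ↔ c - t = t := by
  rw [show (c - t = t) ↔ (t = c - t) from eq_comm, eq_pair_iff]
  unfold pplS; omega

lemma side_trichotomy (c t : ZMod L) :
    (pplS c t ∧ ¬plsS c t ∧ ¬mnsS c t) ∨ (¬pplS c t ∧ plsS c t ∧ ¬mnsS c t) ∨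
      (¬pplS c t ∧ ¬plsS c t ∧ mnsS c t) := by
  have l2 := ZMod.val_lt t; have l3 := ZMod.val_lt c
  unfold pplS plsS mnsS; omega

lemma cp_iff (c t : ZMod L) : cpS c t ↔ pplS c t ∨ plsS c t := by
  unfold cpS pplS plsS; omega

lemma pls_not_ppl (c t : ZMod L) : plsS c t → ¬pplS c t := by unfold plsS pplS; omega
lemma mns_not_ppl (c t : ZMod L) : mnsS c t → ¬pplS c t := by unfold mnsS pplS; omega
lemma mns_not_pls (c t : ZMod L) : mnsS c t → ¬plsS c t := by unfold mnsS plsS; omega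
lemma cp_zero (c : ZMod L) : cpS c 0 := by
  unfold cpS; rw [ZMod.val_zero]; left; omega

set_option maxHeartbeats 1000000 in
lemma side_partition (hL2 : 2 ≤ L) (c t t' : ZMod L)
    (hrel : t' = t ∨ t' = t + 1 ∨ t = t' + 1) :
    ((cpS c t ∧ cpS c t' ∧ ¬(pplS c t ∧ pplS c t')) ∧ ¬(cmS c t ∧ cmS c t' ∧ ¬(pplS c t ∧ pplS c t')) ∧ ¬(pplS c t ∧ pplS c t') ∧ ¬((plsS c t ∧ mnsS c t') ∨ (mnsS c t ∧ plsS c t'))) ∨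
    (¬(cpS c t ∧ cpS c t' ∧ ¬(pplS c t ∧ pplS c t')) ∧ (cmS c t ∧ cmS c t' ∧ ¬(pplS c t ∧ pplS c t')) ∧ ¬(pplS c t ∧ pplS c t') ∧ ¬((plsS c t ∧ mnsS c t') ∨ (mnsS c t ∧ plsS c t'))) ∨
    (¬(cpS c t ∧ cpS c t' ∧ ¬(pplS c t ∧ pplS c t')) ∧ ¬(cmS c t ∧ cmS c t' ∧ ¬(pplS c t ∧ pplS c t')) ∧ (pplS c t ∧ pplS c t') ∧ ¬((plsS c t ∧ mnsS c t') ∨ (mnsS c t ∧ plsS c t'))) ∨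
    (¬(cpS c t ∧ cpS c t' ∧ ¬(pplS c t ∧ pplS c t')) ∧ ¬(cmS c t ∧ cmS c t' ∧ ¬(pplS c t ∧ pplS c t')) ∧ ¬(pplS c t ∧ pplS c t') ∧ ((plsS c t ∧ mnsS c t') ∨ (mnsS c t ∧ plsS c t'))) := by
  have hvt := ZMod.val_lt t; have hvt' := ZMod.val_lt t'; have hvc := ZMod.val_lt c
  have hone : (1 : ZMod L).val = 1 := by
    rw [ZMod.val_one_eq_one_mod]; exact Nat.mod_eq_of_lt hL2
  unfold cpS cmS pplS plsS mnsS
  rcases hrel with h | h | h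
  · subst h; omega
  · have hv := ZMod.val_add t 1
    rw [hone, mod_two_cases Lpos (by omega)] at hv
    subst h; split_ifs at hv <;> omega
  · have hv := ZMod.val_add t' 1
    rw [hone, mod_two_cases Lpos (by omega)] at hv
    subst h; split_ifs at hv <;> omega

lemma cross_unique (hL2 : 2 ≤ L) (c t t' : ZMod L)
    (hrel : t' = t ∨ t' = t + 1 ∨ t = t' + 1) (h1 : plsS c t) (h2 : mnsS c t') :
    t' = c - t := by
  rw [eq_pair_iff]
  have hvt := ZMod.val_lt t; have hvt' := ZMod.val_lt t'; have hvc := ZMod.val_lt c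
  have hone : (1 : ZMod L).val = 1 := by
    rw [ZMod.val_one_eq_one_mod]; exact Nat.mod_eq_of_lt hL2
  unfold plsS at h1; unfold mnsS at h2
  rcases hrel with h | h | h
  · subst h; omega
  · have hv := ZMod.val_add t 1
    rw [hone, mod_two_cases Lpos (by omega)] at hv
    subst h; split_ifs at hv <;> omega
  · have hv := ZMod.val_add t' 1
    rw [hone, mod_two_cases Lpos (by omega)] at hv
    subst h; split_ifs at hv <;> omega

lemma cross_unique' (hL2 : 2 ≤ L) (c t t' : ZMod L)
    (hrel : t' = t ∨ t' = t + 1 ∨ t = t' + 1) (h1 : mnsS c t) (h2 : plsS c t') :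
    t' = c - t := by
  have h3 : t = c - t' := by
    refine cross_unique hL2 c t' t ?_ h2 h1
    rcases hrel with h | h | h
    · exact Or.inl h.symm
    · exact Or.inr (Or.inr h)
    · exact Or.inr (Or.inl h)
  rw [h3, sub_sub_cancel]

end OneD

end RPAux

/-! #### Torus geometry: reflections, translations, adjacency transport. -/

section TorusGeom

variable {d L N : ℕ} [NeZero L]

/-- The reflection `x ↦ (c - x_i, x_{¬i})` of the torus. -/
def reflPt (c : ZMod L) (i : Fin d) (x : TorusPt d L) : TorusPt d L :=
  fun k => if k = i then c - x k else x k

lemma reflPt_i (c : ZMod L) (i : Fin d) (x : TorusPt d L) : reflPt c i x i = c - x i := by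
  unfold reflPt; rw [if_pos rfl]

lemma reflPt_ne (c : ZMod L) (i : Fin d) (x : TorusPt d L) {k : Fin d} (hk : k ≠ i) :
    reflPt c i x k = x k := by
  unfold reflPt; rw [if_neg hk]

lemma reflPt_invol (c : ZMod L) (i : Fin d) (x : TorusPt d L) :
    reflPt c i (reflPt c i x) = x := by
  funext k
  by_cases hk : k = i
  · subst hk; rw [reflPt_i, reflPt_i, sub_sub_cancel]
  · rw [reflPt_ne c i _ hk, reflPt_ne c i _ hk]

lemma reflPt_fixed (c : ZMod L) (i : Fin d) (x : TorusPt d L) (h : RPAux.pplS c (x i)) :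
    reflPt c i x = x := by
  funext k
  by_cases hk : k = i
  · subst hk; rw [reflPt_i]; exact (RPAux.ppl_fixed c (x k)).1 h
  · exact reflPt_ne c i x hk

/-- The reflection as a permutation. -/
def reflPerm (c : ZMod L) (i : Fin d) : Equiv.Perm (TorusPt d L) :=
  ⟨reflPt c i, reflPt c i, reflPt_invol c i, reflPt_invol c i⟩

@[simp] lemma reflPerm_apply (c : ZMod L) (i : Fin d) (x : TorusPt d L) :
    reflPerm c i x = reflPt c i x := rfl

lemma torusAdj_coord {x y : TorusPt d L} (h : torusAdj x y) (k : Fin d) :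
    y k = x k ∨ y k = x k + 1 ∨ x k = y k + 1 := by
  obtain ⟨j, hj | hj⟩ := h
  · by_cases hk : k = j
    · subst hk; right; left; rw [hj, Function.update_self]
    · left; rw [hj, Function.update_of_ne hk]
  · by_cases hk : k = j
    · subst hk; right; right; rw [hj, Function.update_self]; ring
    · left; rw [hj, Function.update_of_ne hk]

lemma torusAdj_symm {x y : TorusPt d L} (h : torusAdj x y) : torusAdj y x := by
  obtain ⟨j, hj | hj⟩ := h
  · refine ⟨j, Or.inr ?_⟩
    funext k
    rw [Function.update_apply]
    split_ifs with hk
    · subst hk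
      have hyk : y k = x k + 1 := by rw [hj, Function.update_self]
      rw [hyk]; ring
    · rw [hj, Function.update_of_ne hk]
  · refine ⟨j, Or.inl ?_⟩
    funext k
    rw [Function.update_apply]
    split_ifs with hk
    · subst hk
      have hyk : y k = x k - 1 := by rw [hj, Function.update_self]
      rw [hyk]; ring
    · rw [hj, Function.update_of_ne hk]

lemma torusAdj_add {x y : TorusPt d L} (w : TorusPt d L) (h : torusAdj x y) :
    torusAdj (x + w) (y + w) := by
  obtain ⟨j, hj | hj⟩ := h
  · refine ⟨j, Or.inl ?_⟩
    funext k
    rw [Pi.add_apply, hj, Function.update_apply, Function.update_apply]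
    split_ifs with hk
    · subst hk; rw [Pi.add_apply]; ring
    · rw [Pi.add_apply]
  · refine ⟨j, Or.inr ?_⟩
    funext k
    rw [Pi.add_apply, hj, Function.update_apply, Function.update_apply]
    split_ifs with hk
    · subst hk; rw [Pi.add_apply]; ring
    · rw [Pi.add_apply]

lemma torusAdj_refl {x y : TorusPt d L} (c : ZMod L) (i : Fin d) (h : torusAdj x y) :
    torusAdj (reflPt c i x) (reflPt c i y) := by
  obtain ⟨j, hj | hj⟩ := h
  · by_cases hji : j = i
    · subst hji
      refine ⟨j, Or.inr ?_⟩
      funext k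
      rw [Function.update_apply]
      split_ifs with hk
      · subst hk
        have hyk : y k = x k + 1 := by rw [hj, Function.update_self]
        rw [reflPt_i, reflPt_i, hyk]; ring
      · rw [reflPt_ne c j _ hk, reflPt_ne c j _ hk, hj, Function.update_of_ne hk]
    · refine ⟨j, Or.inl ?_⟩
      funext k
      rw [Function.update_apply]
      split_ifs with hk
      · subst hk
        have hyk : y k = x k + 1 := by rw [hj, Function.update_self]
        rw [reflPt_ne c i _ hji, reflPt_ne c i _ hji, hyk]
      · by_cases hki : k = i
        · subst hki
          have hyk : y k = x k := by rw [hj, Function.update_of_ne (fun h => hji h.symm)]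
          rw [reflPt_i, reflPt_i, hyk]
        · have hyk : y k = x k := by rw [hj, Function.update_of_ne hk]
          rw [reflPt_ne c i _ hki, reflPt_ne c i _ hki, hyk]
  · by_cases hji : j = i
    · subst hji
      refine ⟨j, Or.inl ?_⟩
      funext k
      rw [Function.update_apply]
      split_ifs with hk
      · subst hk
        have hyk : y k = x k - 1 := by rw [hj, Function.update_self]
        rw [reflPt_i, reflPt_i, hyk]; ring
      · rw [reflPt_ne c j _ hk, reflPt_ne c j _ hk, hj, Function.update_of_ne hk]
    · refine ⟨j, Or.inr ?_⟩
      funext k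
      rw [Function.update_apply]
      split_ifs with hk
      · subst hk
        have hyk : y k = x k - 1 := by rw [hj, Function.update_self]
        rw [reflPt_ne c i _ hji, reflPt_ne c i _ hji, hyk]
      · by_cases hki : k = i
        · subst hki
          have hyk : y k = x k := by rw [hj, Function.update_of_ne (fun h => hji h.symm)]
          rw [reflPt_i, reflPt_i, hyk]
        · have hyk : y k = x k := by rw [hj, Function.update_of_ne hk]
          rw [reflPt_ne c i _ hki, reflPt_ne c i _ hki, hyk]

lemma torusAdj_refl_iff (c : ZMod L) (i : Fin d) {x y : TorusPt d L} :
    torusAdj (reflPt c i x) (reflPt c i y) ↔ torusAdj x y := by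
  constructor
  · intro h
    have h2 := torusAdj_refl c i h
    rwa [reflPt_invol, reflPt_invol] at h2
  · exact torusAdj_refl c i

lemma eq_reflPt_of_adj (c : ZMod L) (i : Fin d) {x y : TorusPt d L}
    (hadj : torusAdj x y) (hne : ¬RPAux.pplS c (x i)) (hyi : y i = c - x i) :
    y = reflPt c i x := by
  obtain ⟨j, hj⟩ := hadj
  by_cases hji : j = i
  · subst hji
    funext k
    by_cases hk : k = j
    · subst hk; rw [hyi, reflPt_i]
    · rcases hj with hj | hj <;> rw [hj, Function.update_of_ne hk, reflPt_ne c j _ hk]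
  · exfalso
    have hyx : y i = x i := by
      rcases hj with hj | hj <;>
        rw [hj, Function.update_of_ne (fun h => hji h.symm)]
    exact hne ((RPAux.ppl_fixed c (x i)).2 (by rw [← hyi, hyx]))

end TorusGeom

/-! #### Analytic preliminaries. -/

section Analytic

variable {d L N : ℕ} [NeZero L]

lemma measurable_coord (x : TorusPt d L) :
    Measurable fun φ : SpinCfg d L N => (φ x : EuclideanSpace ℝ (Fin N)) :=
  measurable_subtype_coe.comp (measurable_pi_apply x)

lemma measurable_inner_pq (p q : TorusPt d L) :
    Measurable fun φ : SpinCfg d L N =>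
      (⟪(φ p : EuclideanSpace ℝ (Fin N)), (φ q : EuclideanSpace ℝ (Fin N))⟫ : ℝ) :=
  (measurable_coord p).inner (measurable_coord q)

lemma measurable_coordk (x : TorusPt d L) (k : Fin N) :
    Measurable fun φ : SpinCfg d L N => (φ x : EuclideanSpace ℝ (Fin N)) k :=
  (measurable_pi_apply k).comp ((WithLp.measurable_ofLp 2 (Fin N → ℝ)).comp (measurable_coord x))

lemma inner_coords (u v : EuclideanSpace ℝ (Fin N)) :
    (⟪u, v⟫ : ℝ) = ∑ k, u k * v k := by
  rw [PiLp.inner_apply]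
  refine Finset.sum_congr rfl fun k _ => ?_
  simp [RCLike.inner_apply, starRingEnd_apply]; ring

lemma coord_abs_le (σ : SpinSphere N) (k : Fin N) :
    |(σ : EuclideanSpace ℝ (Fin N)) k| ≤ 1 := by
  have hn : ‖(σ : EuclideanSpace ℝ (Fin N))‖ = 1 := mem_sphere_zero_iff_norm.mp σ.2
  have h2 : |(σ : EuclideanSpace ℝ (Fin N)) k| ≤ ‖(σ : EuclideanSpace ℝ (Fin N))‖ := by
    rw [EuclideanSpace.norm_eq]
    have h3 : ‖(σ : EuclideanSpace ℝ (Fin N)) k‖ ^ 2 ≤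
        ∑ j, ‖(σ : EuclideanSpace ℝ (Fin N)) j‖ ^ 2 :=
      Finset.single_le_sum (f := fun j => ‖(σ : EuclideanSpace ℝ (Fin N)) j‖ ^ 2)
        (fun j _ => sq_nonneg _) (Finset.mem_univ k)
    have h4 := Real.sqrt_le_sqrt h3
    rwa [Real.sqrt_sq_eq_abs, abs_norm, Real.norm_eq_abs] at h4
  linarith

lemma inner_abs_le (σ τ : SpinSphere N) :
    |(⟪(σ : EuclideanSpace ℝ (Fin N)), (τ : EuclideanSpace ℝ (Fin N))⟫ : ℝ)| ≤ 1 := by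
  have h := abs_real_inner_le_norm (σ : EuclideanSpace ℝ (Fin N)) (τ : EuclideanSpace ℝ (Fin N))
  rw [mem_sphere_zero_iff_norm.mp σ.2, mem_sphere_zero_iff_norm.mp τ.2] at h
  simpa using h

lemma sphereUniform_prob (hN : 1 ≤ N) : IsProbabilityMeasure (sphereUniform N) := by
  constructor
  rw [sphereUniform, Measure.smul_apply, smul_eq_mul]
  refine ENNReal.inv_mul_cancel ?_ (measure_ne_top _ _)
  rw [Measure.toSphere_apply_univ]
  refine mul_ne_zero ?_ (Metric.measure_ball_pos _ _ one_pos).ne'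
  rw [finrank_euclideanSpace, Fintype.card_fin]
  exact Nat.cast_ne_zero.mpr (by omega)

lemma integrable_bdd {α : Type*} [MeasurableSpace α] {m : Measure α} [IsFiniteMeasure m]
    {f : α → ℝ} (hf : AEStronglyMeasurable f m) {C : ℝ} (hC : ∀ a, |f a| ≤ C) :
    Integrable f m :=
  Integrable.mono' (integrable_const C) hf
    (Filter.Eventually.of_forall fun a => by simpa [Real.norm_eq_abs] using hC a)

end Analytic

/-! #### Generic pieces of the Hamiltonian and their properties. -/

section Hgen

open RPAux

variable {d L N : ℕ} [NeZero L]

/-- A piece of the Hamiltonian, restricted to ordered pairs whose `i`-th coordinates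
satisfy the predicate `Q`. -/
noncomputable def Hgen (Q : ZMod L → ZMod L → Prop) [∀ a b, Decidable (Q a b)]
    (i : Fin d) (φ : SpinCfg d L N) : ℝ :=
  -(1 / 2) * ∑ x : TorusPt d L, ∑ y : TorusPt d L,
    if torusAdj x y ∧ Q (x i) (y i) then
      ⟪(φ x : EuclideanSpace ℝ (Fin N)), (φ y : EuclideanSpace ℝ (Fin N))⟫
    else 0

lemma measurable_Hgen (Q : ZMod L → ZMod L → Prop) [∀ a b, Decidable (Q a b)] (i : Fin d) :
    Measurable (Hgen (d := d) (N := N) Q i) := by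
  unfold Hgen
  refine Measurable.const_mul ?_ _
  refine Finset.measurable_sum _ fun x _ => ?_
  refine Finset.measurable_sum _ fun y _ => ?_
  by_cases h : torusAdj x y ∧ Q (x i) (y i)
  · simpa [h] using measurable_inner_pq x y
  · simpa [h] using measurable_const

lemma measurable_hamiltonian :
    Measurable (hamiltonian (d := d) (L := L) (N := N)) := by
  unfold hamiltonian
  refine Measurable.const_mul ?_ _
  refine Finset.measurable_sum _ fun x _ => ?_
  refine Finset.measurable_sum _ fun y _ => ?_
  by_cases h : torusAdj x y
  · simpa [h] using measurable_inner_pq x y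
  · simpa [h] using measurable_const

lemma abs_double_sum_le (P : TorusPt d L → TorusPt d L → Prop) [∀ x y, Decidable (P x y)]
    (φ : SpinCfg d L N) :
    |(-(1 / 2) : ℝ) * ∑ x : TorusPt d L, ∑ y : TorusPt d L,
        (if P x y then
          (⟪(φ x : EuclideanSpace ℝ (Fin N)), (φ y : EuclideanSpace ℝ (Fin N))⟫ : ℝ)
        else 0)| ≤ ((Fintype.card (TorusPt d L) : ℝ)) ^ 2 := by
  have hcard : (0 : ℝ) ≤ (Fintype.card (TorusPt d L) : ℝ) := Nat.cast_nonneg _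
  have hin : ∀ x : TorusPt d L,
      |∑ y : TorusPt d L, (if P x y then
          (⟪(φ x : EuclideanSpace ℝ (Fin N)), (φ y : EuclideanSpace ℝ (Fin N))⟫ : ℝ) else 0)|
        ≤ (Fintype.card (TorusPt d L) : ℝ) := by
    intro x
    calc |∑ y : TorusPt d L, (if P x y then
            (⟪(φ x : EuclideanSpace ℝ (Fin N)), (φ y : EuclideanSpace ℝ (Fin N))⟫ : ℝ) else 0)|
        ≤ ∑ y : TorusPt d L, |(if P x y then
            (⟪(φ x : EuclideanSpace ℝ (Fin N)), (φ y : EuclideanSpace ℝ (Fin N))⟫ : ℝ) else 0)| :=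
          Finset.abs_sum_le_sum_abs _ _
      _ ≤ ∑ _y : TorusPt d L, (1 : ℝ) := by
          refine Finset.sum_le_sum fun y _ => ?_
          split_ifs with h
          · exact inner_abs_le _ _
          · simp
      _ = (Fintype.card (TorusPt d L) : ℝ) := by
          rw [Finset.sum_const, Finset.card_univ, nsmul_eq_mul, mul_one]
  calc |(-(1 / 2) : ℝ) * _| = (1 / 2 : ℝ) * |∑ x : TorusPt d L, ∑ y : TorusPt d L,
          (if P x y then
            (⟪(φ x : EuclideanSpace ℝ (Fin N)), (φ y : EuclideanSpace ℝ (Fin N))⟫ : ℝ) else 0)| := by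
        rw [abs_mul]; norm_num
    _ ≤ (1 / 2 : ℝ) * ((Fintype.card (TorusPt d L) : ℝ) * (Fintype.card (TorusPt d L) : ℝ)) := by
        refine mul_le_mul_of_nonneg_left ?_ (by norm_num)
        calc |∑ x : TorusPt d L, ∑ y : TorusPt d L, _| ≤ ∑ x : TorusPt d L, |∑ y : TorusPt d L,
              (if P x y then
                (⟪(φ x : EuclideanSpace ℝ (Fin N)), (φ y : EuclideanSpace ℝ (Fin N))⟫ : ℝ) else 0)| :=
              Finset.abs_sum_le_sum_abs _ _
          _ ≤ ∑ _x : TorusPt d L, (Fintype.card (TorusPt d L) : ℝ) :=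
              Finset.sum_le_sum fun x _ => hin x
          _ = (Fintype.card (TorusPt d L) : ℝ) * (Fintype.card (TorusPt d L) : ℝ) := by
              rw [Finset.sum_const, Finset.card_univ, nsmul_eq_mul]
    _ ≤ ((Fintype.card (TorusPt d L) : ℝ)) ^ 2 := by nlinarith

lemma abs_hamiltonian_le (φ : SpinCfg d L N) :
    |hamiltonian φ| ≤ ((Fintype.card (TorusPt d L) : ℝ)) ^ 2 := by
  have h := abs_double_sum_le (fun x y : TorusPt d L => torusAdj x y) φ
  simpa [hamiltonian] using h

lemma abs_Hgen_le (Q : ZMod L → ZMod L → Prop) [∀ a b, Decidable (Q a b)] (i : Fin d)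
    (φ : SpinCfg d L N) :
    |Hgen Q i φ| ≤ ((Fintype.card (TorusPt d L) : ℝ)) ^ 2 := by
  have h := abs_double_sum_le (fun x y : TorusPt d L => torusAdj x y ∧ Q (x i) (y i)) φ
  simpa [Hgen] using h

lemma Hgen_congr (Q : ZMod L → ZMod L → Prop) [∀ a b, Decidable (Q a b)] (i : Fin d)
    {R : ZMod L → Prop} (hQ : ∀ a b, Q a b → R a ∧ R b)
    {φ ψ : SpinCfg d L N} (h : ∀ x, R (x i) → φ x = ψ x) : Hgen Q i φ = Hgen Q i ψ := by
  unfold Hgen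
  congr 1
  refine Finset.sum_congr rfl fun x _ => Finset.sum_congr rfl fun y _ => ?_
  split_ifs with hc
  · rw [h x (hQ _ _ hc.2).1, h y (hQ _ _ hc.2).2]
  · rfl

lemma Hgen_congr_Q (Q Q' : ZMod L → ZMod L → Prop) [∀ a b, Decidable (Q a b)]
    [∀ a b, Decidable (Q' a b)] (i : Fin d) (h : ∀ a b, Q a b ↔ Q' a b) (φ : SpinCfg d L N) :
    Hgen Q i φ = Hgen Q' i φ := by
  unfold Hgen
  congr 1
  refine Finset.sum_congr rfl fun x _ => Finset.sum_congr rfl fun y _ => ?_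
  exact if_congr (and_congr Iff.rfl (h _ _)) rfl rfl

lemma Hgen_reflPt (Q : ZMod L → ZMod L → Prop) [∀ a b, Decidable (Q a b)]
    (c : ZMod L) (i : Fin d) (φ : SpinCfg d L N) :
    Hgen Q i (fun x => φ (reflPt c i x)) = Hgen (fun a b => Q (c - a) (c - b)) i φ := by
  unfold Hgen
  congr 1
  rw [← Equiv.sum_comp (reflPerm (L := L) c i)
    (fun x => ∑ y : TorusPt d L, if torusAdj x y ∧ Q (c - x i) (c - y i) then
      (⟪(φ x : EuclideanSpace ℝ (Fin N)), (φ y : EuclideanSpace ℝ (Fin N))⟫ : ℝ) else 0)]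
  refine Finset.sum_congr rfl fun x _ => ?_
  rw [← Equiv.sum_comp (reflPerm (L := L) c i)
    (fun y => if torusAdj (reflPerm c i x) y ∧ Q (c - (reflPerm c i x) i) (c - y i) then
      (⟪(φ (reflPerm c i x) : EuclideanSpace ℝ (Fin N)), (φ y : EuclideanSpace ℝ (Fin N))⟫ : ℝ)
      else 0)]
  refine Finset.sum_congr rfl fun y _ => ?_
  simp only [reflPerm_apply]
  refine if_congr ?_ rfl rfl
  rw [reflPt_i, reflPt_i, sub_sub_cancel, sub_sub_cancel]
  exact and_congr (torusAdj_refl_iff c i).symm Iff.rfl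

end Hgen

/-! #### Decomposition of the Hamiltonian relative to a reflection. -/

section Decomp

open RPAux

variable {d L N : ℕ} [NeZero L]

def Qp (c : ZMod L) : ZMod L → ZMod L → Prop :=
  fun a b => cpS c a ∧ cpS c b ∧ ¬(pplS c a ∧ pplS c b)

def Qm (c : ZMod L) : ZMod L → ZMod L → Prop :=
  fun a b => cmS c a ∧ cmS c b ∧ ¬(pplS c a ∧ pplS c b)

def Qq (c : ZMod L) : ZMod L → ZMod L → Prop := fun a b => pplS c a ∧ pplS c b

def Qx (c : ZMod L) : ZMod L → ZMod L → Prop :=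
  fun a b => (plsS c a ∧ mnsS c b) ∨ (mnsS c a ∧ plsS c b)

instance (c a b : ZMod L) : Decidable (Qp c a b) := by unfold Qp; infer_instance
instance (c a b : ZMod L) : Decidable (Qm c a b) := by unfold Qm; infer_instance
instance (c a b : ZMod L) : Decidable (Qq c a b) := by unfold Qq; infer_instance
instance (c a b : ZMod L) : Decidable (Qx c a b) := by unfold Qx; infer_instance

lemma ham_decomp (hL2 : 2 ≤ L) (c : ZMod L) (i : Fin d) (φ : SpinCfg d L N) :
    hamiltonian φ =
      Hgen (Qp c) i φ + Hgen (Qm c) i φ + Hgen (Qq c) i φ + Hgen (Qx c) i φ := by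
  have key : ∀ x y : TorusPt d L,
      (if torusAdj x y then
        (⟪(φ x : EuclideanSpace ℝ (Fin N)), (φ y : EuclideanSpace ℝ (Fin N))⟫ : ℝ) else 0) =
      (if torusAdj x y ∧ Qp c (x i) (y i) then
        (⟪(φ x : EuclideanSpace ℝ (Fin N)), (φ y : EuclideanSpace ℝ (Fin N))⟫ : ℝ) else 0) +
      ((if torusAdj x y ∧ Qm c (x i) (y i) then
        (⟪(φ x : EuclideanSpace ℝ (Fin N)), (φ y : EuclideanSpace ℝ (Fin N))⟫ : ℝ) else 0) +
      ((if torusAdj x y ∧ Qq c (x i) (y i) then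
        (⟪(φ x : EuclideanSpace ℝ (Fin N)), (φ y : EuclideanSpace ℝ (Fin N))⟫ : ℝ) else 0) +
      (if torusAdj x y ∧ Qx c (x i) (y i) then
        (⟪(φ x : EuclideanSpace ℝ (Fin N)), (φ y : EuclideanSpace ℝ (Fin N))⟫ : ℝ) else 0))) := by
    intro x y
    by_cases h : torusAdj x y
    · have hrel := torusAdj_coord h i
      have hpart := side_partition hL2 c (x i) (y i) hrel
      unfold Qp Qm Qq Qx
      rcases hpart with ⟨h1, h2, h3, h4⟩ | ⟨h1, h2, h3, h4⟩ | ⟨h1, h2, h3, h4⟩ | ⟨h1, h2, h3, h4⟩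
      · rw [if_pos h, if_pos ⟨h, h1⟩, if_neg (fun hc => h2 hc.2),
          if_neg (fun hc => h3 hc.2), if_neg (fun hc => h4 hc.2)]; ring
      · rw [if_pos h, if_neg (fun hc => h1 hc.2), if_pos ⟨h, h2⟩,
          if_neg (fun hc => h3 hc.2), if_neg (fun hc => h4 hc.2)]; ring
      · rw [if_pos h, if_neg (fun hc => h1 hc.2), if_neg (fun hc => h2 hc.2),
          if_pos ⟨h, h3⟩, if_neg (fun hc => h4 hc.2)]; ring
      · rw [if_pos h, if_neg (fun hc => h1 hc.2), if_neg (fun hc => h2 hc.2),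
          if_neg (fun hc => h3 hc.2), if_pos ⟨h, h4⟩]; ring
    · simp [h]
  unfold hamiltonian Hgen
  have hsum : (∑ x : TorusPt d L, ∑ y : TorusPt d L,
      (if torusAdj x y then
        (⟪(φ x : EuclideanSpace ℝ (Fin N)), (φ y : EuclideanSpace ℝ (Fin N))⟫ : ℝ) else 0)) =
      (∑ x : TorusPt d L, ∑ y : TorusPt d L,
        (if torusAdj x y ∧ Qp c (x i) (y i) then
          (⟪(φ x : EuclideanSpace ℝ (Fin N)), (φ y : EuclideanSpace ℝ (Fin N))⟫ : ℝ) else 0)) +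
      ((∑ x : TorusPt d L, ∑ y : TorusPt d L,
        (if torusAdj x y ∧ Qm c (x i) (y i) then
          (⟪(φ x : EuclideanSpace ℝ (Fin N)), (φ y : EuclideanSpace ℝ (Fin N))⟫ : ℝ) else 0)) +
      ((∑ x : TorusPt d L, ∑ y : TorusPt d L,
        (if torusAdj x y ∧ Qq c (x i) (y i) then
          (⟪(φ x : EuclideanSpace ℝ (Fin N)), (φ y : EuclideanSpace ℝ (Fin N))⟫ : ℝ) else 0)) +
      (∑ x : TorusPt d L, ∑ y : TorusPt d L,
        (if torusAdj x y ∧ Qx c (x i) (y i) then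
          (⟪(φ x : EuclideanSpace ℝ (Fin N)), (φ y : EuclideanSpace ℝ (Fin N))⟫ : ℝ) else 0)))) := by
    rw [← Finset.sum_add_distrib, ← Finset.sum_add_distrib, ← Finset.sum_add_distrib]
    refine Finset.sum_congr rfl fun x _ => ?_
    rw [← Finset.sum_add_distrib, ← Finset.sum_add_distrib, ← Finset.sum_add_distrib]
    exact Finset.sum_congr rfl fun y _ => key x y
  rw [hsum]; ring

lemma Hm_eq (c : ZMod L) (i : Fin d) (φ : SpinCfg d L N) :
    Hgen (Qm c) i φ = Hgen (Qp c) i (fun x => φ (reflPt c i x)) := by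
  rw [Hgen_reflPt]
  refine Hgen_congr_Q _ _ i (fun a b => ?_) φ
  simp only [Qp, Qm, cp_sub, ppl_sub]

end Decomp

/-! #### Invariance of the Gibbs weight under adjacency-preserving permutations. -/

section Invariance

variable {d L N : ℕ} [NeZero L]

lemma hamiltonian_comp (e : Equiv.Perm (TorusPt d L))
    (he : ∀ x y, torusAdj (e x) (e y) ↔ torusAdj x y) (φ : SpinCfg d L N) :
    hamiltonian (fun x => φ (e x)) = hamiltonian φ := by
  unfold hamiltonian
  congr 1
  calc ∑ x : TorusPt d L, ∑ y : TorusPt d L,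
        (if torusAdj x y then
          (⟪(φ (e x) : EuclideanSpace ℝ (Fin N)), (φ (e y) : EuclideanSpace ℝ (Fin N))⟫ : ℝ)
        else 0)
      = ∑ x : TorusPt d L, ∑ y : TorusPt d L,
        (if torusAdj (e x) (e y) then
          (⟪(φ (e x) : EuclideanSpace ℝ (Fin N)), (φ (e y) : EuclideanSpace ℝ (Fin N))⟫ : ℝ)
        else 0) := by
        refine Finset.sum_congr rfl fun x _ => Finset.sum_congr rfl fun y _ => ?_
        exact if_congr (he x y).symm rfl rfl
    _ = ∑ x : TorusPt d L, ∑ y : TorusPt d L,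
        (if torusAdj x y then
          (⟪(φ x : EuclideanSpace ℝ (Fin N)), (φ y : EuclideanSpace ℝ (Fin N))⟫ : ℝ)
        else 0) := by
        rw [← Equiv.sum_comp e (fun x => ∑ y : TorusPt d L,
          (if torusAdj x y then
            (⟪(φ x : EuclideanSpace ℝ (Fin N)), (φ y : EuclideanSpace ℝ (Fin N))⟫ : ℝ) else 0))]
        refine Finset.sum_congr rfl fun x _ => ?_
        rw [← Equiv.sum_comp e (fun y => if torusAdj (e x) y then
          (⟪(φ (e x) : EuclideanSpace ℝ (Fin N)), (φ y : EuclideanSpace ℝ (Fin N))⟫ : ℝ) else 0)]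

lemma measurable_comp_perm (e : Equiv.Perm (TorusPt d L)) :
    Measurable (fun φ : SpinCfg d L N => fun x : TorusPt d L => φ (e x)) :=
  measurable_pi_lambda _ fun x => measurable_pi_apply (e x)

lemma map_comp_perm (hP : IsProbabilityMeasure (sphereUniform N)) (e : Equiv.Perm (TorusPt d L)) :
    Measure.map (fun φ : SpinCfg d L N => fun x => φ (e x)) (spinMeasure d L N) =
      spinMeasure d L N := by
  haveI := hP
  haveI : IsProbabilityMeasure (spinMeasure d L N) := by
    unfold spinMeasure; infer_instance
  show _ = Measure.pi (fun _ : TorusPt d L => sphereUniform N)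
  refine (Measure.pi_eq fun s hs => ?_).symm
  rw [Measure.map_apply (measurable_comp_perm e) (MeasurableSet.univ_pi hs)]
  have hpre : (fun φ : SpinCfg d L N => fun x => φ (e x)) ⁻¹' (Set.univ.pi s)
      = Set.univ.pi (fun y => s (e.symm y)) := by
    ext φ
    simp only [Set.mem_preimage, Set.mem_univ_pi]
    constructor
    · intro h y
      simpa using h (e.symm y)
    · intro h x
      simpa using h (e x)
  have : spinMeasure d L N = Measure.pi (fun _ : TorusPt d L => sphereUniform N) := rfl
  rw [hpre, this, Measure.pi_pi]
  exact Equiv.prod_comp e.symm fun y => sphereUniform N (s y)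

lemma integral_comp_perm (hP : IsProbabilityMeasure (sphereUniform N))
    (e : Equiv.Perm (TorusPt d L)) (f : SpinCfg d L N → ℝ)
    (hf : AEStronglyMeasurable f (spinMeasure d L N)) :
    ∫ φ, f (fun x => φ (e x)) ∂(spinMeasure d L N) = ∫ φ, f φ ∂(spinMeasure d L N) := by
  conv_rhs => rw [← map_comp_perm hP e]
  rw [integral_map (measurable_comp_perm e).aemeasurable ((map_comp_perm hP e).symm ▸ hf)]

lemma integral_inner_exp_comp (hP : IsProbabilityMeasure (sphereUniform N)) (β : ℝ)
    (e : Equiv.Perm (TorusPt d L)) (he : ∀ x y, torusAdj (e x) (e y) ↔ torusAdj x y)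
    (p q : TorusPt d L) :
    ∫ φ : SpinCfg d L N,
        (⟪(φ (e p) : EuclideanSpace ℝ (Fin N)), (φ (e q) : EuclideanSpace ℝ (Fin N))⟫ : ℝ) *
          Real.exp (-β * hamiltonian φ) ∂(spinMeasure d L N)
      = ∫ φ : SpinCfg d L N,
        (⟪(φ p : EuclideanSpace ℝ (Fin N)), (φ q : EuclideanSpace ℝ (Fin N))⟫ : ℝ) *
          Real.exp (-β * hamiltonian φ) ∂(spinMeasure d L N) := by
  have h2 : ∀ φ : SpinCfg d L N, hamiltonian (fun x => φ (e x)) = hamiltonian φ :=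
    hamiltonian_comp e he
  have hmeas : AEStronglyMeasurable
      (fun ψ : SpinCfg d L N =>
        (⟪(ψ p : EuclideanSpace ℝ (Fin N)), (ψ q : EuclideanSpace ℝ (Fin N))⟫ : ℝ) *
          Real.exp (-β * hamiltonian ψ)) (spinMeasure d L N) :=
    ((measurable_inner_pq p q).mul
      ((measurable_hamiltonian.const_mul (-β)).exp)).aestronglyMeasurable
  rw [← integral_comp_perm hP e
    (fun ψ : SpinCfg d L N =>
      (⟪(ψ p : EuclideanSpace ℝ (Fin N)), (ψ q : EuclideanSpace ℝ (Fin N))⟫ : ℝ) *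
        Real.exp (-β * hamiltonian ψ)) hmeas]
  exact integral_congr_ae (Filter.Eventually.of_forall fun φ => by simp only [h2])

end Invariance

/-! #### The gluing map and the factorisation of the spin measure. -/

section Glue

open RPAux

variable {d L N : ℕ} [NeZero L]

/-- Glue three configurations: the plane part from the first, the strict plus part from
the second, and the strict minus part (reflected) from the third. -/
def glueCfg (c : ZMod L) (i : Fin d)
    (w : SpinCfg d L N × (SpinCfg d L N × SpinCfg d L N)) : SpinCfg d L N :=
  fun x => if pplS c (x i) then w.1 x else if plsS c (x i) then w.2.1 x
    else w.2.2 (reflPt c i x)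

lemma measurable_glueCfg (c : ZMod L) (i : Fin d) :
    Measurable (glueCfg (d := d) (L := L) (N := N) c i) := by
  refine measurable_pi_lambda _ fun x => ?_
  unfold glueCfg
  split_ifs
  · exact (measurable_pi_apply x).comp measurable_fst
  · exact (measurable_pi_apply x).comp (measurable_fst.comp measurable_snd)
  · exact (measurable_pi_apply (reflPt c i x)).comp (measurable_snd.comp measurable_snd)

lemma glueCfg_ppl (c : ZMod L) (i : Fin d) (π α α' : SpinCfg d L N) {x : TorusPt d L}
    (h : pplS c (x i)) : glueCfg c i (π, α, α') x = π x := by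
  unfold glueCfg; rw [if_pos h]

lemma glueCfg_pls (c : ZMod L) (i : Fin d) (π α α' : SpinCfg d L N) {x : TorusPt d L}
    (h : plsS c (x i)) : glueCfg c i (π, α, α') x = α x := by
  unfold glueCfg; rw [if_neg (pls_not_ppl c (x i) h), if_pos h]

lemma glueCfg_mns (c : ZMod L) (i : Fin d) (π α α' : SpinCfg d L N) {x : TorusPt d L}
    (h : mnsS c (x i)) : glueCfg c i (π, α, α') x = α' (reflPt c i x) := by
  unfold glueCfg; rw [if_neg (mns_not_ppl c (x i) h), if_neg (mns_not_pls c (x i) h)]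

lemma glueCfg_agree (c : ZMod L) (i : Fin d) (π α α' α'' : SpinCfg d L N) :
    ∀ x : TorusPt d L, cpS c (x i) →
      glueCfg c i (π, α, α') x = glueCfg c i (π, α, α'') x := by
  intro x hx
  rcases (cp_iff c (x i)).1 hx with h | h
  · rw [glueCfg_ppl c i _ _ _ h, glueCfg_ppl c i _ _ _ h]
  · rw [glueCfg_pls c i _ _ _ h, glueCfg_pls c i _ _ _ h]

lemma glueCfg_refl (c : ZMod L) (i : Fin d) (π α α' : SpinCfg d L N) :
    (fun x => glueCfg c i (π, α, α') (reflPt c i x)) = glueCfg c i (π, α', α) := by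
  funext x
  rcases side_trichotomy c (x i) with ⟨h1, h2, h3⟩ | ⟨h1, h2, h3⟩ | ⟨h1, h2, h3⟩
  · rw [reflPt_fixed c i x h1, glueCfg_ppl c i _ _ _ h1, glueCfg_ppl c i _ _ _ h1]
  · have hm : mnsS c ((reflPt c i x) i) := by
      rw [reflPt_i]; exact (mns_sub c (x i)).2 h2
    rw [glueCfg_mns c i _ _ _ hm, reflPt_invol, glueCfg_pls c i _ _ _ h2]
  · have hp : plsS c ((reflPt c i x) i) := by
      rw [reflPt_i]; exact (pls_sub c (x i)).2 h3
    rw [glueCfg_pls c i _ _ _ hp, glueCfg_mns c i _ _ _ h3]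

/-- The spin measure factorises through the gluing map. -/
lemma glueCfg_map (hP : IsProbabilityMeasure (sphereUniform N)) (c : ZMod L) (i : Fin d) :
    Measure.map (glueCfg (d := d) c i)
      ((spinMeasure d L N).prod ((spinMeasure d L N).prod (spinMeasure d L N))) =
      spinMeasure d L N := by
  haveI := hP
  haveI : IsProbabilityMeasure (spinMeasure d L N) := by
    unfold spinMeasure; infer_instance
  show _ = Measure.pi (fun _ : TorusPt d L => sphereUniform N)
  refine (Measure.pi_eq fun s hs => ?_).symm
  rw [Measure.map_apply (measurable_glueCfg c i) (MeasurableSet.univ_pi hs)]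
  have hpre : glueCfg (d := d) c i ⁻¹' (Set.univ.pi s) =
      (Set.univ.pi fun x => if pplS c (x i) then s x else Set.univ) ×ˢ
      ((Set.univ.pi fun x => if plsS c (x i) then s x else Set.univ) ×ˢ
       (Set.univ.pi fun y => if plsS c (y i) then s (reflPt c i y) else Set.univ)) := by
    ext w
    obtain ⟨π, α, α'⟩ := w
    simp only [Set.mem_preimage, Set.mem_prod, Set.mem_univ_pi]
    constructor
    · intro h
      refine ⟨fun x => ?_, fun x => ?_, fun y => ?_⟩
      · split_ifs with hx
        · have := h x; rwa [glueCfg_ppl c i _ _ _ hx] at this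
        · trivial
      · split_ifs with hx
        · have := h x; rwa [glueCfg_pls c i _ _ _ hx] at this
        · trivial
      · split_ifs with hy
        · have hm : mnsS c ((reflPt c i y) i) := by
            rw [reflPt_i]; exact (mns_sub c (y i)).2 hy
          have := h (reflPt c i y)
          rwa [glueCfg_mns c i _ _ _ hm, reflPt_invol] at this
        · trivial
    · rintro ⟨h1, h2, h3⟩ x
      rcases side_trichotomy c (x i) with ⟨ha, hb, hc⟩ | ⟨ha, hb, hc⟩ | ⟨ha, hb, hc⟩
      · rw [glueCfg_ppl c i _ _ _ ha]
        have := h1 x; rwa [if_pos ha] at this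
      · rw [glueCfg_pls c i _ _ _ hb]
        have := h2 x; rwa [if_pos hb] at this
      · rw [glueCfg_mns c i _ _ _ hc]
        have hp : plsS c ((reflPt c i x) i) := by
          rw [reflPt_i]; exact (pls_sub c (x i)).2 hc
        have := h3 (reflPt c i x)
        rwa [if_pos hp, reflPt_invol] at this
  rw [hpre]
  have hms : ∀ (t : TorusPt d L → Set (SpinSphere N)) (P : TorusPt d L → Prop)
      [DecidablePred P], (∀ x, MeasurableSet (t x)) →
      MeasurableSet (Set.univ.pi fun x => if P x then t x else Set.univ) := by
    intro t P _ ht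
    refine MeasurableSet.univ_pi fun x => ?_
    split_ifs
    · exact ht x
    · exact MeasurableSet.univ
  rw [Measure.prod_prod, Measure.prod_prod]
  show (Measure.pi fun _ => sphereUniform N) _ * ((Measure.pi fun _ => sphereUniform N) _ *
    (Measure.pi fun _ => sphereUniform N) _) = _
  rw [Measure.pi_pi, Measure.pi_pi, Measure.pi_pi]
  have e1 : ∀ x : TorusPt d L,
      sphereUniform N (if pplS c (x i) then s x else Set.univ) =
        if pplS c (x i) then sphereUniform N (s x) else 1 := by
    intro x; split_ifs <;> simp
  have e2 : ∀ x : TorusPt d L,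
      sphereUniform N (if plsS c (x i) then s x else Set.univ) =
        if plsS c (x i) then sphereUniform N (s x) else 1 := by
    intro x; split_ifs <;> simp
  have e3 : ∀ y : TorusPt d L,
      sphereUniform N (if plsS c (y i) then s (reflPt c i y) else Set.univ) =
        if plsS c (y i) then sphereUniform N (s (reflPt c i y)) else 1 := by
    intro y; split_ifs <;> simp
  simp only [e1, e2, e3]
  have e4 : (∏ y : TorusPt d L,
      if plsS c (y i) then sphereUniform N (s (reflPt c i y)) else 1) =
      ∏ x : TorusPt d L, if mnsS c (x i) then sphereUniform N (s x) else 1 := by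
    rw [← Equiv.prod_comp (reflPerm (L := L) c i)
      (fun x => if mnsS c (x i) then sphereUniform N (s x) else 1)]
    refine Finset.prod_congr rfl fun y _ => ?_
    simp only [reflPerm_apply]
    simp only [reflPt_i]
    exact if_congr (mns_sub c (y i)).symm rfl rfl
  rw [e4, ← Finset.prod_mul_distrib, ← Finset.prod_mul_distrib]
  refine Finset.prod_congr rfl fun x _ => ?_
  rcases side_trichotomy c (x i) with ⟨h1, h2, h3⟩ | ⟨h1, h2, h3⟩ | ⟨h1, h2, h3⟩ <;>
    simp [h1, h2, h3]

lemma glueCfg_integral (hP : IsProbabilityMeasure (sphereUniform N)) (c : ZMod L) (i : Fin d)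
    (f : SpinCfg d L N → ℝ) (hf : AEStronglyMeasurable f (spinMeasure d L N)) :
    ∫ φ, f φ ∂(spinMeasure d L N) =
      ∫ w, f (glueCfg c i w)
        ∂((spinMeasure d L N).prod ((spinMeasure d L N).prod (spinMeasure d L N))) := by
  conv_lhs => rw [← glueCfg_map hP c i]
  exact integral_map (measurable_glueCfg c i).aemeasurable ((glueCfg_map hP c i).symm ▸ hf)

end Glue

/-! #### The cross term. -/

section Cross

open RPAux

variable {d L N : ℕ} [NeZero L]

/-- Coefficient functions indexing the cross term. -/
def aCoef (c : ZMod L) (i : Fin d) (j : TorusPt d L × Fin N) (α : SpinCfg d L N) : ℝ :=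
  if plsS c (j.1 i) ∧ torusAdj j.1 (reflPt c i j.1) then
    (α j.1 : EuclideanSpace ℝ (Fin N)) j.2 else 0

lemma measurable_aCoef (c : ZMod L) (i : Fin d) (j : TorusPt d L × Fin N) :
    Measurable (aCoef (N := N) c i j) := by
  unfold aCoef
  split_ifs
  · exact measurable_coordk j.1 j.2
  · exact measurable_const

lemma abs_aCoef_le (c : ZMod L) (i : Fin d) (j : TorusPt d L × Fin N) (α : SpinCfg d L N) :
    |aCoef c i j α| ≤ 1 := by
  unfold aCoef
  split_ifs
  · exact coord_abs_le _ _
  · simp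

/-- The cross interaction as a sum of products. -/
noncomputable def Kc (c : ZMod L) (i : Fin d) (α α' : SpinCfg d L N) : ℝ :=
  ∑ j : TorusPt d L × Fin N, aCoef c i j α * aCoef c i j α'

lemma abs_Kc_le (c : ZMod L) (i : Fin d) (α α' : SpinCfg d L N) :
    |Kc c i α α'| ≤ (Fintype.card (TorusPt d L × Fin N) : ℝ) := by
  unfold Kc
  calc |∑ j : TorusPt d L × Fin N, aCoef c i j α * aCoef c i j α'|
      ≤ ∑ j : TorusPt d L × Fin N, |aCoef c i j α * aCoef c i j α'| :=
        Finset.abs_sum_le_sum_abs _ _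
    _ ≤ ∑ _j : TorusPt d L × Fin N, (1 : ℝ) := by
        refine Finset.sum_le_sum fun j _ => ?_
        rw [abs_mul]
        exact mul_le_one₀ (abs_aCoef_le c i j α) (abs_nonneg _) (abs_aCoef_le c i j α')
    _ = (Fintype.card (TorusPt d L × Fin N) : ℝ) := by
        rw [Finset.sum_const, Finset.card_univ, nsmul_eq_mul, mul_one]

/-- Collapse of the cross part of the Hamiltonian. -/
lemma HxD_eq (hL2 : 2 ≤ L) (c : ZMod L) (i : Fin d) (φ : SpinCfg d L N) :
    Hgen (Qx c) i φ = -∑ x : TorusPt d L,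
      (if plsS c (x i) ∧ torusAdj x (reflPt c i x) then
        (⟪(φ x : EuclideanSpace ℝ (Fin N)), (φ (reflPt c i x) : EuclideanSpace ℝ (Fin N))⟫ : ℝ)
      else 0) := by
  have inner_eq : ∀ x : TorusPt d L,
      (∑ y : TorusPt d L, if torusAdj x y ∧ Qx c (x i) (y i) then
        (⟪(φ x : EuclideanSpace ℝ (Fin N)), (φ y : EuclideanSpace ℝ (Fin N))⟫ : ℝ) else 0)
      = (if plsS c (x i) ∧ torusAdj x (reflPt c i x) then
          (⟪(φ x : EuclideanSpace ℝ (Fin N)), (φ (reflPt c i x) : EuclideanSpace ℝ (Fin N))⟫ : ℝ)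
        else 0)
      + (if mnsS c (x i) ∧ torusAdj x (reflPt c i x) then
          (⟪(φ x : EuclideanSpace ℝ (Fin N)), (φ (reflPt c i x) : EuclideanSpace ℝ (Fin N))⟫ : ℝ)
        else 0) := by
    intro x
    rw [Finset.sum_eq_single (reflPt c i x)]
    · rcases side_trichotomy c (x i) with ⟨h1, h2, h3⟩ | ⟨h1, h2, h3⟩ | ⟨h1, h2, h3⟩
      · rw [if_neg (fun hc => by
            rcases hc.2 with ⟨hp, _⟩ | ⟨hm, _⟩
            exacts [h2 hp, h3 hm]),
          if_neg (fun hc => h2 hc.1), if_neg (fun hc => h3 hc.1)]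
        norm_num
      · have hm : mnsS c ((reflPt c i x) i) := by
          rw [reflPt_i]; exact (mns_sub c (x i)).2 h2
        by_cases ha : torusAdj x (reflPt c i x)
        · rw [if_pos ⟨ha, Or.inl ⟨h2, hm⟩⟩, if_pos ⟨h2, ha⟩,
            if_neg (fun hc => h3 hc.1)]
          norm_num
        · rw [if_neg (fun hc => ha hc.1), if_neg (fun hc => ha hc.2),
            if_neg (fun hc => ha hc.2)]
          norm_num
      · have hp : plsS c ((reflPt c i x) i) := by
          rw [reflPt_i]; exact (pls_sub c (x i)).2 h3
        by_cases ha : torusAdj x (reflPt c i x)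
        · rw [if_pos ⟨ha, Or.inr ⟨h3, hp⟩⟩, if_neg (fun hc => h2 hc.1),
            if_pos ⟨h3, ha⟩]
          norm_num
        · rw [if_neg (fun hc => ha hc.1), if_neg (fun hc => ha hc.2),
            if_neg (fun hc => ha hc.2)]
          norm_num
    · intro y _ hy
      by_cases hterm : torusAdj x y ∧ Qx c (x i) (y i)
      · exfalso
        apply hy
        obtain ⟨hadj, hQ⟩ := hterm
        have hrel := torusAdj_coord hadj i
        rcases hQ with ⟨hp, hm⟩ | ⟨hm, hp⟩
        · exact eq_reflPt_of_adj c i hadj (pls_not_ppl c (x i) hp)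
            (cross_unique hL2 c (x i) (y i) hrel hp hm)
        · exact eq_reflPt_of_adj c i hadj (mns_not_ppl c (x i) hm)
            (cross_unique' hL2 c (x i) (y i) hrel hm hp)
      · exact if_neg hterm
    · intro h; exact absurd (Finset.mem_univ _) h
  have swap : (∑ x : TorusPt d L,
      (if mnsS c (x i) ∧ torusAdj x (reflPt c i x) then
        (⟪(φ x : EuclideanSpace ℝ (Fin N)), (φ (reflPt c i x) : EuclideanSpace ℝ (Fin N))⟫ : ℝ)
      else 0))
      = ∑ x : TorusPt d L,
      (if plsS c (x i) ∧ torusAdj x (reflPt c i x) then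
        (⟪(φ x : EuclideanSpace ℝ (Fin N)), (φ (reflPt c i x) : EuclideanSpace ℝ (Fin N))⟫ : ℝ)
      else 0) := by
    rw [← Equiv.sum_comp (reflPerm (L := L) c i)
      (fun x => if plsS c (x i) ∧ torusAdj x (reflPt c i x) then
        (⟪(φ x : EuclideanSpace ℝ (Fin N)),
          (φ (reflPt c i x) : EuclideanSpace ℝ (Fin N))⟫ : ℝ) else 0)]
    refine Finset.sum_congr rfl fun x _ => ?_
    simp only [reflPerm_apply]
    simp only [reflPt_invol, reflPt_i]
    exact if_congr (and_congr (pls_sub c (x i)).symm ⟨torusAdj_symm, torusAdj_symm⟩)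
      (real_inner_comm _ _) rfl
  unfold Hgen
  rw [Finset.sum_congr rfl (fun x _ => inner_eq x), Finset.sum_add_distrib, swap]
  ring

end Cross

/-! #### Decomposition of the Hamiltonian on glued configurations. -/

section GlueDecomp

open RPAux

variable {d L N : ℕ} [NeZero L]

lemma Hx_glue (hL2 : 2 ≤ L) (c : ZMod L) (i : Fin d) (π α α' : SpinCfg d L N) :
    Hgen (Qx c) i (glueCfg c i (π, α, α')) = -Kc c i α α' := by
  rw [HxD_eq hL2]
  congr 1
  unfold Kc
  rw [Fintype.sum_prod_type]
  refine Finset.sum_congr rfl fun x _ => ?_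
  by_cases hc : plsS c (x i) ∧ torusAdj x (reflPt c i x)
  · rw [if_pos hc]
    have h1 : glueCfg c i (π, α, α') x = α x := glueCfg_pls c i π α α' hc.1
    have hm : mnsS c ((reflPt c i x) i) := by
      rw [reflPt_i]; exact (mns_sub c (x i)).2 hc.1
    have h2 : glueCfg c i (π, α, α') (reflPt c i x) = α' x := by
      rw [glueCfg_mns c i π α α' hm, reflPt_invol]
    rw [h1, h2, inner_coords]
    refine Finset.sum_congr rfl fun k _ => ?_
    unfold aCoef
    rw [if_pos hc, if_pos hc]
  · rw [if_neg hc]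
    symm
    refine Finset.sum_eq_zero fun k _ => ?_
    unfold aCoef
    rw [if_neg hc, if_neg hc, mul_zero]

lemma hamiltonian_glue (hL2 : 2 ≤ L) (c : ZMod L) (i : Fin d) (π α α' : SpinCfg d L N) :
    hamiltonian (glueCfg c i (π, α, α')) =
      Hgen (Qp c) i (glueCfg c i (π, α, α)) + Hgen (Qp c) i (glueCfg c i (π, α', α'))
        + Hgen (Qq c) i π - Kc c i α α' := by
  rw [ham_decomp hL2 c i]
  have h1 : Hgen (Qp c) i (glueCfg c i (π, α, α')) = Hgen (Qp c) i (glueCfg c i (π, α, α)) :=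
    Hgen_congr (Qp c) i (R := cpS c) (fun a b h => ⟨h.1, h.2.1⟩) (glueCfg_agree c i π α α' α)
  have h2 : Hgen (Qm c) i (glueCfg c i (π, α, α')) =
      Hgen (Qp c) i (glueCfg c i (π, α', α')) := by
    rw [Hm_eq c i, glueCfg_refl c i π α α']
    exact Hgen_congr (Qp c) i (R := cpS c) (fun a b h => ⟨h.1, h.2.1⟩)
      (glueCfg_agree c i π α' α α')
  have h3 : Hgen (Qq c) i (glueCfg c i (π, α, α')) = Hgen (Qq c) i π :=
    Hgen_congr (Qq c) i (R := pplS c) (fun a b h => h)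
      (fun x hx => glueCfg_ppl c i π α α' hx)
  have h4 := Hx_glue hL2 c i π α α'
  rw [h1, h2, h3, h4]; ring

lemma Kc_pow (c : ZMod L) (i : Fin d) (α α' : SpinCfg d L N) (n : ℕ) :
    (Kc c i α α') ^ n = ∑ f : Fin n → TorusPt d L × Fin N,
      (∏ m, aCoef c i (f m) α) * (∏ m, aCoef c i (f m) α') := by
  have h1 : (Kc c i α α') ^ n = ∏ _m : Fin n, Kc c i α α' := by
    rw [Finset.prod_const, Finset.card_univ, Fintype.card_fin]
  rw [h1]
  unfold Kc
  rw [Finset.prod_univ_sum (fun _ => Finset.univ)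
    (fun _ j => aCoef c i j α * aCoef c i j α'), Fintype.piFinset_univ]
  exact Finset.sum_congr rfl fun f _ => by rw [Finset.prod_mul_distrib]

/-- The one-sided weight. -/
noncomputable def Rfun (c : ZMod L) (i : Fin d) (β : ℝ) (G : SpinCfg d L N → ℝ)
    (p : SpinCfg d L N × SpinCfg d L N) : ℝ :=
  G (glueCfg c i (p.1, p.2, p.2)) *
    Real.exp (-β * Hgen (Qp c) i (glueCfg c i (p.1, p.2, p.2)))

lemma measurable_glue2 (c : ZMod L) (i : Fin d) :
    Measurable (fun p : SpinCfg d L N × SpinCfg d L N => glueCfg c i (p.1, p.2, p.2)) :=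
  (measurable_glueCfg c i).comp
    (measurable_fst.prodMk (measurable_snd.prodMk measurable_snd))

lemma measurable_Rfun (c : ZMod L) (i : Fin d) (β : ℝ) (G : SpinCfg d L N → ℝ)
    (hGm : Measurable G) : Measurable (Rfun c i β G) := by
  unfold Rfun
  exact (hGm.comp (measurable_glue2 c i)).mul
    ((((measurable_Hgen (Qp c) i).comp (measurable_glue2 c i)).const_mul (-β)).exp)

lemma abs_Rfun_le (c : ZMod L) (i : Fin d) {β : ℝ} (hβ : 0 ≤ β) (G : SpinCfg d L N → ℝ)
    {M : ℝ} (hM : 0 ≤ M) (hGb : ∀ φ, |G φ| ≤ M) (p : SpinCfg d L N × SpinCfg d L N) :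
    |Rfun c i β G p| ≤ M * Real.exp (β * ((Fintype.card (TorusPt d L) : ℝ)) ^ 2) := by
  unfold Rfun
  rw [abs_mul, Real.abs_exp]
  refine mul_le_mul (hGb _) ?_ (Real.exp_pos _).le hM
  rw [Real.exp_le_exp]
  have h := abs_Hgen_le (Qp c) i (glueCfg c i (p.1, p.2, p.2))
  have h2 : -(Hgen (Qp c) i (glueCfg c i (p.1, p.2, p.2))) ≤
      ((Fintype.card (TorusPt d L) : ℝ)) ^ 2 := by
    have := neg_abs_le (Hgen (Qp c) i (glueCfg c i (p.1, p.2, p.2)))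
    linarith
  calc -β * Hgen (Qp c) i (glueCfg c i (p.1, p.2, p.2))
      = β * (-(Hgen (Qp c) i (glueCfg c i (p.1, p.2, p.2)))) := by ring
    _ ≤ β * ((Fintype.card (TorusPt d L) : ℝ)) ^ 2 := mul_le_mul_of_nonneg_left h2 hβ

end GlueDecomp

/-! #### Reflection positivity. -/

section RP

open RPAux

variable {d L N : ℕ} [NeZero L]

/-- The weight functions with cross-insertions. -/
noncomputable def Wfun (c : ZMod L) (i : Fin d) (β : ℝ) (G : SpinCfg d L N → ℝ) {n : ℕ}
    (f : Fin n → TorusPt d L × Fin N) (p : SpinCfg d L N × SpinCfg d L N) : ℝ :=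
  Rfun c i β G p * ∏ m, aCoef c i (f m) p.2

/-- The summands of the series expansion of the cross weight. -/
noncomputable def Ffun (c : ZMod L) (i : Fin d) (β : ℝ) (G : SpinCfg d L N → ℝ) (n : ℕ)
    (w : SpinCfg d L N × (SpinCfg d L N × SpinCfg d L N)) : ℝ :=
  Real.exp (-β * Hgen (Qq c) i w.1) *
    (Rfun c i β G (w.1, w.2.1) * Rfun c i β G (w.1, w.2.2)) *
      (β ^ n * (Kc c i w.2.1 w.2.2) ^ n / n.factorial)

lemma measurable_Wfun (c : ZMod L) (i : Fin d) (β : ℝ) (G : SpinCfg d L N → ℝ)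
    (hGm : Measurable G) {n : ℕ} (f : Fin n → TorusPt d L × Fin N) :
    Measurable (Wfun c i β G f) := by
  unfold Wfun
  exact (measurable_Rfun c i β G hGm).mul
    (Finset.measurable_prod _ fun m _ => (measurable_aCoef c i (f m)).comp measurable_snd)

lemma abs_Wfun_le (c : ZMod L) (i : Fin d) {β : ℝ} (hβ : 0 ≤ β) (G : SpinCfg d L N → ℝ)
    {M : ℝ} (hM : 0 ≤ M) (hGb : ∀ φ, |G φ| ≤ M) {n : ℕ} (f : Fin n → TorusPt d L × Fin N)
    (p : SpinCfg d L N × SpinCfg d L N) :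
    |Wfun c i β G f p| ≤ M * Real.exp (β * ((Fintype.card (TorusPt d L) : ℝ)) ^ 2) := by
  unfold Wfun
  rw [abs_mul]
  have h1 : |∏ m, aCoef c i (f m) p.2| ≤ 1 := by
    rw [Finset.abs_prod]
    exact Finset.prod_le_one (fun m _ => abs_nonneg _) (fun m _ => abs_aCoef_le c i (f m) p.2)
  calc |Rfun c i β G p| * |∏ m, aCoef c i (f m) p.2|
      ≤ (M * Real.exp (β * ((Fintype.card (TorusPt d L) : ℝ)) ^ 2)) * 1 :=
        mul_le_mul (abs_Rfun_le c i hβ G hM hGb p) h1 (abs_nonneg _)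
          (mul_nonneg hM (Real.exp_pos _).le)
    _ = M * Real.exp (β * ((Fintype.card (TorusPt d L) : ℝ)) ^ 2) := mul_one _

lemma measurable_Kc2 (c : ZMod L) (i : Fin d) :
    Measurable (fun w : SpinCfg d L N × (SpinCfg d L N × SpinCfg d L N) =>
      Kc c i w.2.1 w.2.2) := by
  unfold Kc
  refine Finset.measurable_sum _ fun j _ => ?_
  exact ((measurable_aCoef c i j).comp (measurable_fst.comp measurable_snd)).mul
    ((measurable_aCoef c i j).comp (measurable_snd.comp measurable_snd))

lemma measurable_Ffun (c : ZMod L) (i : Fin d) (β : ℝ) (G : SpinCfg d L N → ℝ)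
    (hGm : Measurable G) (n : ℕ) : Measurable (Ffun c i β G n) := by
  unfold Ffun
  refine Measurable.mul (Measurable.mul ?_ ?_) ?_
  · exact (((measurable_Hgen (Qq c) i).comp measurable_fst).const_mul (-β)).exp
  · exact ((measurable_Rfun c i β G hGm).comp
        (measurable_fst.prodMk (measurable_fst.comp measurable_snd))).mul
      ((measurable_Rfun c i β G hGm).comp
        (measurable_fst.prodMk (measurable_snd.comp measurable_snd)))
  · exact (((measurable_Kc2 c i).pow_const n).const_mul (β ^ n)).div_const _

lemma exp_negmul_le {β : ℝ} (hβ : 0 ≤ β) {H C : ℝ} (hH : |H| ≤ C) :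
    Real.exp (-β * H) ≤ Real.exp (β * C) := by
  rw [Real.exp_le_exp]
  have h1 : -H ≤ C := by have := neg_abs_le H; linarith
  calc -β * H = β * (-H) := by ring
    _ ≤ β * C := mul_le_mul_of_nonneg_left h1 hβ

lemma abs_Ffun_le (c : ZMod L) (i : Fin d) {β : ℝ} (hβ : 0 ≤ β) (G : SpinCfg d L N → ℝ)
    {M : ℝ} (hM : 0 ≤ M) (hGb : ∀ φ, |G φ| ≤ M) (n : ℕ)
    (w : SpinCfg d L N × (SpinCfg d L N × SpinCfg d L N)) :
    |Ffun c i β G n w| ≤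
      (Real.exp (β * ((Fintype.card (TorusPt d L) : ℝ)) ^ 2) *
        ((M * Real.exp (β * ((Fintype.card (TorusPt d L) : ℝ)) ^ 2)) *
         (M * Real.exp (β * ((Fintype.card (TorusPt d L) : ℝ)) ^ 2)))) *
      ((β * (Fintype.card (TorusPt d L × Fin N) : ℝ)) ^ n / n.factorial) := by
  have hKn : |(Kc c i w.2.1 w.2.2) ^ n| ≤ (Fintype.card (TorusPt d L × Fin N) : ℝ) ^ n := by
    rw [abs_pow]
    exact pow_le_pow_left₀ (abs_nonneg _) (abs_Kc_le c i _ _) n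
  have he : |Real.exp (-β * Hgen (Qq c) i w.1)| ≤
      Real.exp (β * ((Fintype.card (TorusPt d L) : ℝ)) ^ 2) := by
    rw [Real.abs_exp]
    exact exp_negmul_le hβ (abs_Hgen_le (Qq c) i w.1)
  have hR1 := abs_Rfun_le c i hβ G hM hGb (w.1, w.2.1)
  have hR2 := abs_Rfun_le c i hβ G hM hGb (w.1, w.2.2)
  have hfacpos : (0 : ℝ) < (n.factorial : ℝ) := by
    exact_mod_cast Nat.cast_pos.mpr n.factorial_pos
  have hCR0 : (0:ℝ) ≤ M * Real.exp (β * ((Fintype.card (TorusPt d L) : ℝ)) ^ 2) :=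
    mul_nonneg hM (Real.exp_pos _).le
  have h3 : β ^ n * |(Kc c i w.2.1 w.2.2) ^ n| / n.factorial ≤
      β ^ n * (Fintype.card (TorusPt d L × Fin N) : ℝ) ^ n / n.factorial := by
    refine (div_le_div_iff_of_pos_right hfacpos).mpr ?_
    exact mul_le_mul_of_nonneg_left hKn (pow_nonneg hβ n)
  calc |Ffun c i β G n w|
      = |Real.exp (-β * Hgen (Qq c) i w.1)| *
          (|Rfun c i β G (w.1, w.2.1)| * |Rfun c i β G (w.1, w.2.2)|) *
          (β ^ n * |(Kc c i w.2.1 w.2.2) ^ n| / n.factorial) := by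
        unfold Ffun
        rw [abs_mul, abs_mul, abs_mul, abs_div, abs_mul, abs_pow β, abs_of_nonneg hβ,
          Nat.abs_cast]
    _ ≤ (Real.exp (β * ((Fintype.card (TorusPt d L) : ℝ)) ^ 2) *
          ((M * Real.exp (β * ((Fintype.card (TorusPt d L) : ℝ)) ^ 2)) *
           (M * Real.exp (β * ((Fintype.card (TorusPt d L) : ℝ)) ^ 2)))) *
          (β ^ n * (Fintype.card (TorusPt d L × Fin N) : ℝ) ^ n / n.factorial) := by
        refine mul_le_mul (mul_le_mul he ?_ (mul_nonneg (abs_nonneg _) (abs_nonneg _))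
            (Real.exp_pos _).le) h3
          (div_nonneg (mul_nonneg (pow_nonneg hβ n) (abs_nonneg _)) hfacpos.le)
          (mul_nonneg (Real.exp_pos _).le (mul_nonneg hCR0 hCR0))
        exact mul_le_mul hR1 hR2 (abs_nonneg _) hCR0
    _ = (Real.exp (β * ((Fintype.card (TorusPt d L) : ℝ)) ^ 2) *
          ((M * Real.exp (β * ((Fintype.card (TorusPt d L) : ℝ)) ^ 2)) *
           (M * Real.exp (β * ((Fintype.card (TorusPt d L) : ℝ)) ^ 2)))) *
          ((β * (Fintype.card (TorusPt d L × Fin N) : ℝ)) ^ n / n.factorial) := by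
        rw [mul_pow]

lemma reflection_positivity (hL2 : 2 ≤ L) (hP : IsProbabilityMeasure (sphereUniform N))
    {β : ℝ} (hβ : 0 ≤ β) (c : ZMod L) (i : Fin d)
    (G : SpinCfg d L N → ℝ) (hGm : Measurable G) {M : ℝ} (hM : 0 ≤ M) (hGb : ∀ φ, |G φ| ≤ M)
    (hGdep : ∀ φ ψ : SpinCfg d L N, (∀ x, cpS c (x i) → φ x = ψ x) → G φ = G ψ) :
    0 ≤ ∫ φ, G φ * G (fun x => φ (reflPt c i x)) * Real.exp (-β * hamiltonian φ)
        ∂(spinMeasure d L N) := by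
  haveI := hP
  haveI hPμ : IsProbabilityMeasure (spinMeasure d L N) := by
    unfold spinMeasure; infer_instance
  have hfm : Measurable (fun φ : SpinCfg d L N =>
      G φ * G (fun x => φ (reflPt c i x)) * Real.exp (-β * hamiltonian φ)) := by
    refine (hGm.mul ?_).mul ((measurable_hamiltonian.const_mul (-β)).exp)
    exact hGm.comp (measurable_comp_perm (reflPerm c i))
  rw [glueCfg_integral hP c i _ hfm.aestronglyMeasurable]
  have hexp4 : ∀ A B C K : ℝ, Real.exp (-β * (A + B + C - K)) =
      Real.exp (-β * C) * (Real.exp (-β * A) * Real.exp (-β * B)) * Real.exp (β * K) := by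
    intro A B C K
    rw [← Real.exp_add, ← Real.exp_add, ← Real.exp_add]
    congr 1; ring
  have hser : ∀ K : ℝ, Real.exp (β * K) = ∑' n : ℕ, β ^ n * K ^ n / n.factorial := by
    intro K
    rw [Real.exp_eq_exp_ℝ, NormedSpace.exp_eq_tsum_div]
    exact tsum_congr fun n => by rw [mul_pow]
  have hpoint : ∀ w : SpinCfg d L N × (SpinCfg d L N × SpinCfg d L N),
      G (glueCfg c i w) * G (fun x => glueCfg c i w (reflPt c i x)) *
        Real.exp (-β * hamiltonian (glueCfg c i w))
      = ∑' n : ℕ, Ffun c i β G n w := by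
    rintro ⟨π, α, α'⟩
    rw [glueCfg_refl c i π α α',
      hGdep (glueCfg c i (π, α, α')) (glueCfg c i (π, α, α)) (glueCfg_agree c i π α α' α),
      hGdep (glueCfg c i (π, α', α)) (glueCfg c i (π, α', α')) (glueCfg_agree c i π α' α α'),
      hamiltonian_glue hL2 c i π α α', hexp4, hser (Kc c i α α'),
      ← tsum_mul_left, ← tsum_mul_left]
    refine tsum_congr fun n => ?_
    unfold Ffun Rfun
    ring
  have hFmeas : ∀ n : ℕ, AEStronglyMeasurable (Ffun c i β G n)
      ((spinMeasure d L N).prod ((spinMeasure d L N).prod (spinMeasure d L N))) :=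
    fun n => (measurable_Ffun c i β G hGm n).aestronglyMeasurable
  have hbnd := abs_Ffun_le (M := M) c i hβ G hM hGb
  have hsummable : Summable (fun n : ℕ =>
      (Real.exp (β * ((Fintype.card (TorusPt d L) : ℝ)) ^ 2) *
        ((M * Real.exp (β * ((Fintype.card (TorusPt d L) : ℝ)) ^ 2)) *
         (M * Real.exp (β * ((Fintype.card (TorusPt d L) : ℝ)) ^ 2)))) *
      ((β * (Fintype.card (TorusPt d L × Fin N) : ℝ)) ^ n / n.factorial)) :=
    (Real.summable_pow_div_factorial _).mul_left _
  have hCR0 : (0:ℝ) ≤ M * Real.exp (β * ((Fintype.card (TorusPt d L) : ℝ)) ^ 2) :=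
    mul_nonneg hM (Real.exp_pos _).le
  have hbnn : ∀ n : ℕ, (0:ℝ) ≤
      (Real.exp (β * ((Fintype.card (TorusPt d L) : ℝ)) ^ 2) *
        ((M * Real.exp (β * ((Fintype.card (TorusPt d L) : ℝ)) ^ 2)) *
         (M * Real.exp (β * ((Fintype.card (TorusPt d L) : ℝ)) ^ 2)))) *
      ((β * (Fintype.card (TorusPt d L × Fin N) : ℝ)) ^ n / n.factorial) := by
    intro n
    refine mul_nonneg (mul_nonneg (Real.exp_pos _).le (mul_nonneg hCR0 hCR0)) ?_
    refine div_nonneg (pow_nonneg ?_ n) (Nat.cast_nonneg _)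
    exact mul_nonneg hβ (Nat.cast_nonneg _)
  have hne : (∑' n : ℕ, ∫⁻ w, ‖Ffun c i β G n w‖₊
      ∂((spinMeasure d L N).prod ((spinMeasure d L N).prod (spinMeasure d L N)))) ≠ ⊤ := by
    have hb : ∀ n : ℕ, (∫⁻ w, ‖Ffun c i β G n w‖₊
        ∂((spinMeasure d L N).prod ((spinMeasure d L N).prod (spinMeasure d L N)))) ≤
        ENNReal.ofReal ((Real.exp (β * ((Fintype.card (TorusPt d L) : ℝ)) ^ 2) *
          ((M * Real.exp (β * ((Fintype.card (TorusPt d L) : ℝ)) ^ 2)) *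
           (M * Real.exp (β * ((Fintype.card (TorusPt d L) : ℝ)) ^ 2)))) *
        ((β * (Fintype.card (TorusPt d L × Fin N) : ℝ)) ^ n / n.factorial)) := by
      intro n
      calc (∫⁻ w, ‖Ffun c i β G n w‖₊
            ∂((spinMeasure d L N).prod ((spinMeasure d L N).prod (spinMeasure d L N))))
          ≤ ∫⁻ _w, ENNReal.ofReal ((Real.exp (β * ((Fintype.card (TorusPt d L) : ℝ)) ^ 2) *
              ((M * Real.exp (β * ((Fintype.card (TorusPt d L) : ℝ)) ^ 2)) *
               (M * Real.exp (β * ((Fintype.card (TorusPt d L) : ℝ)) ^ 2)))) *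
            ((β * (Fintype.card (TorusPt d L × Fin N) : ℝ)) ^ n / n.factorial))
            ∂((spinMeasure d L N).prod ((spinMeasure d L N).prod (spinMeasure d L N))) := by
            refine lintegral_mono fun w => ?_
            rw [← enorm_eq_nnnorm, ← ofReal_norm]
            exact ENNReal.ofReal_le_ofReal
              (by rw [Real.norm_eq_abs]; exact hbnd n w)
        _ = ENNReal.ofReal ((Real.exp (β * ((Fintype.card (TorusPt d L) : ℝ)) ^ 2) *
              ((M * Real.exp (β * ((Fintype.card (TorusPt d L) : ℝ)) ^ 2)) *
               (M * Real.exp (β * ((Fintype.card (TorusPt d L) : ℝ)) ^ 2)))) *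
            ((β * (Fintype.card (TorusPt d L × Fin N) : ℝ)) ^ n / n.factorial)) := by
            rw [lintegral_const, measure_univ, mul_one]
    refine ne_top_of_le_ne_top ?_ (ENNReal.tsum_le_tsum hb)
    rw [← ENNReal.ofReal_tsum_of_nonneg hbnn hsummable]
    exact ENNReal.ofReal_ne_top
  have h1 : (∫ w, G (glueCfg c i w) * G (fun x => glueCfg c i w (reflPt c i x)) *
        Real.exp (-β * hamiltonian (glueCfg c i w))
        ∂((spinMeasure d L N).prod ((spinMeasure d L N).prod (spinMeasure d L N))))
      = ∑' n : ℕ, ∫ w, Ffun c i β G n w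
        ∂((spinMeasure d L N).prod ((spinMeasure d L N).prod (spinMeasure d L N))) := by
    rw [integral_congr_ae (Filter.Eventually.of_forall hpoint)]
    exact integral_tsum hFmeas hne
  rw [h1]
  refine tsum_nonneg fun n => ?_
  -- expand the n-th term into a finite sum of squares
  have hFn : ∀ w : SpinCfg d L N × (SpinCfg d L N × SpinCfg d L N),
      Ffun c i β G n w = ∑ f : Fin n → TorusPt d L × Fin N,
        (β ^ n / n.factorial) * (Wfun c i β G f (w.1, w.2.1) * Wfun c i β G f (w.1, w.2.2) *
          Real.exp (-β * Hgen (Qq c) i w.1)) := by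
    intro w
    unfold Ffun Wfun
    rw [Kc_pow, Finset.mul_sum, Finset.sum_div, Finset.mul_sum]
    exact Finset.sum_congr rfl fun f _ => by unfold Rfun; ring
  have hWmeas : ∀ (f : Fin n → TorusPt d L × Fin N),
      Measurable (fun w : SpinCfg d L N × (SpinCfg d L N × SpinCfg d L N) =>
        Wfun c i β G f (w.1, w.2.1) * Wfun c i β G f (w.1, w.2.2) *
          Real.exp (-β * Hgen (Qq c) i w.1)) := by
    intro f
    refine Measurable.mul (Measurable.mul ?_ ?_)
      ((((measurable_Hgen (Qq c) i).comp measurable_fst).const_mul (-β)).exp)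
    · exact (measurable_Wfun c i β G hGm f).comp
        (measurable_fst.prodMk (measurable_fst.comp measurable_snd))
    · exact (measurable_Wfun c i β G hGm f).comp
        (measurable_fst.prodMk (measurable_snd.comp measurable_snd))
  have hWbdd : ∀ (f : Fin n → TorusPt d L × Fin N)
      (w : SpinCfg d L N × (SpinCfg d L N × SpinCfg d L N)),
      |Wfun c i β G f (w.1, w.2.1) * Wfun c i β G f (w.1, w.2.2) *
        Real.exp (-β * Hgen (Qq c) i w.1)| ≤
      (M * Real.exp (β * ((Fintype.card (TorusPt d L) : ℝ)) ^ 2)) *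
        (M * Real.exp (β * ((Fintype.card (TorusPt d L) : ℝ)) ^ 2)) *
        Real.exp (β * ((Fintype.card (TorusPt d L) : ℝ)) ^ 2) := by
    intro f w
    rw [abs_mul, abs_mul]
    refine mul_le_mul (mul_le_mul (abs_Wfun_le c i hβ G hM hGb f _)
        (abs_Wfun_le c i hβ G hM hGb f _) (abs_nonneg _) hCR0) ?_ (abs_nonneg _)
      (mul_nonneg hCR0 hCR0)
    rw [Real.abs_exp]
    exact exp_negmul_le hβ (abs_Hgen_le (Qq c) i w.1)
  have hWint : ∀ (f : Fin n → TorusPt d L × Fin N),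
      Integrable (fun w : SpinCfg d L N × (SpinCfg d L N × SpinCfg d L N) =>
        Wfun c i β G f (w.1, w.2.1) * Wfun c i β G f (w.1, w.2.2) *
          Real.exp (-β * Hgen (Qq c) i w.1))
        ((spinMeasure d L N).prod ((spinMeasure d L N).prod (spinMeasure d L N))) :=
    fun f => integrable_bdd (hWmeas f).aestronglyMeasurable (hWbdd f)
  have h2 : (∫ w, Ffun c i β G n w
      ∂((spinMeasure d L N).prod ((spinMeasure d L N).prod (spinMeasure d L N))))
      = ∑ f : Fin n → TorusPt d L × Fin N, (β ^ n / n.factorial) *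
        ∫ w, Wfun c i β G f (w.1, w.2.1) * Wfun c i β G f (w.1, w.2.2) *
          Real.exp (-β * Hgen (Qq c) i w.1)
          ∂((spinMeasure d L N).prod ((spinMeasure d L N).prod (spinMeasure d L N))) := by
    rw [integral_congr_ae (Filter.Eventually.of_forall hFn),
      integral_finset_sum _ (fun f _ => ((hWint f).const_mul _))]
    exact Finset.sum_congr rfl fun f _ => integral_const_mul _ _
  rw [h2]
  refine Finset.sum_nonneg fun f _ => ?_
  refine mul_nonneg (div_nonneg (pow_nonneg hβ n) (Nat.cast_nonneg _)) ?_
  rw [integral_prod _ (hWint f)]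
  refine integral_nonneg fun π => ?_
  show 0 ≤ ∫ q : SpinCfg d L N × SpinCfg d L N,
    Wfun c i β G f (π, q.1) * Wfun c i β G f (π, q.2) *
      Real.exp (-β * Hgen (Qq c) i π) ∂((spinMeasure d L N).prod (spinMeasure d L N))
  rw [integral_mul_const]
  refine mul_nonneg ?_ (Real.exp_pos _).le
  rw [integral_prod_mul (fun a => Wfun c i β G f (π, a)) (fun a => Wfun c i β G f (π, a))]
  exact mul_self_nonneg _

end RP



/-- **Site-monotonicity for the spin O(N) model (projection onto an axis).**
For every `z ∈ T_L` and coordinate direction `i`, the spin-spin correlation satisfies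
`⟨φ_o ⬝ φ_z⟩ ≤ ⟨φ_o ⬝ φ_{z_i e_i}⟩`. -/
theorem spin_corr_le_axis_projection
    (d L N : ℕ) [NeZero L] (hd : 2 ≤ d) (hL : Even L) (hN : 1 ≤ N)
    (β : ℝ) (hβ : 0 ≤ β) (z : TorusPt d L) (i : Fin d) :
    corrDot d L N β (torusOrigin d L) z ≤
      corrDot d L N β (torusOrigin d L) (fun k => if k = i then z i else 0) := by
  classical
  have hP : IsProbabilityMeasure (sphereUniform N) := sphereUniform_prob hN
  haveI := hP
  haveI hPμ : IsProbabilityMeasure (spinMeasure d L N) := by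
    unfold spinMeasure; infer_instance
  have hL2 : 2 ≤ L := by
    rcases hL with ⟨m, hm⟩
    have := NeZero.ne L
    omega
  -- notation
  set wpt : TorusPt d L := (fun k => if k = i then 0 else z k) with hwpt
  have hwi : wpt i = 0 := by simp [hwpt]
  have hoi : torusOrigin d L i = (0 : ZMod L) := rfl
  -- reflection images
  have hθo : reflPt (z i) i (torusOrigin d L) = (fun k => if k = i then z i else 0) := by
    funext k
    by_cases hk : k = i
    · subst hk
      rw [reflPt_i, hoi, sub_zero, if_pos rfl]
    · rw [reflPt_ne _ i _ hk, if_neg hk]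
      rfl
  have hθw : reflPt (z i) i wpt = z := by
    funext k
    by_cases hk : k = i
    · subst hk
      rw [reflPt_i, hwi, sub_zero]
    · rw [reflPt_ne _ i _ hk, hwpt]
      simp [hk]
  have hθz'' : reflPt (z i) i (fun k => if k = i then z i else 0) = torusOrigin d L := by
    funext k
    by_cases hk : k = i
    · subst hk
      rw [reflPt_i, if_pos rfl, sub_self]
      rfl
    · rw [reflPt_ne _ i _ hk, if_neg hk]
      rfl
  have hzw : (fun k => if k = i then z i else 0) + wpt = z := by
    funext k
    by_cases hk : k = i
    · subst hk
      rw [Pi.add_apply, hwpt]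
      simp
    · rw [Pi.add_apply, hwpt]
      simp [hk]
  have how : torusOrigin d L + wpt = wpt := by
    funext k
    rw [Pi.add_apply, show torusOrigin d L k = 0 from rfl, zero_add]
  -- basic measurability and integrability
  have hexpm : Measurable (fun φ : SpinCfg d L N => Real.exp (-β * hamiltonian φ)) :=
    (measurable_hamiltonian.const_mul (-β)).exp
  have hIint : ∀ p q : TorusPt d L, Integrable (fun φ : SpinCfg d L N =>
      (⟪(φ p : EuclideanSpace ℝ (Fin N)), (φ q : EuclideanSpace ℝ (Fin N))⟫ : ℝ) *
        Real.exp (-β * hamiltonian φ)) (spinMeasure d L N) := by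
    intro p q
    refine integrable_bdd ((measurable_inner_pq p q).mul hexpm).aestronglyMeasurable
      (C := Real.exp (β * ((Fintype.card (TorusPt d L) : ℝ)) ^ 2)) (fun φ => ?_)
    rw [abs_mul, Real.abs_exp]
    calc |(⟪(φ p : EuclideanSpace ℝ (Fin N)), (φ q : EuclideanSpace ℝ (Fin N))⟫ : ℝ)| *
          Real.exp (-β * hamiltonian φ)
        ≤ 1 * Real.exp (β * ((Fintype.card (TorusPt d L) : ℝ)) ^ 2) :=
          mul_le_mul (inner_abs_le _ _) (exp_negmul_le hβ (abs_hamiltonian_le φ))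
            (Real.exp_pos _).le one_pos.le
      _ = _ := one_mul _
  -- positivity of the partition function
  have hZpos : 0 < ∫ φ, Real.exp (-β * hamiltonian φ) ∂(spinMeasure d L N) := by
    have hint : Integrable (fun φ : SpinCfg d L N => Real.exp (-β * hamiltonian φ))
        (spinMeasure d L N) := by
      refine integrable_bdd hexpm.aestronglyMeasurable
        (C := Real.exp (β * ((Fintype.card (TorusPt d L) : ℝ)) ^ 2)) (fun φ => ?_)
      rw [Real.abs_exp]
      exact exp_negmul_le hβ (abs_hamiltonian_le φ)
    have hlow : ∀ φ : SpinCfg d L N,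
        Real.exp (-(β * ((Fintype.card (TorusPt d L) : ℝ)) ^ 2)) ≤
          Real.exp (-β * hamiltonian φ) := by
      intro φ
      rw [Real.exp_le_exp]
      have h1 : hamiltonian φ ≤ ((Fintype.card (TorusPt d L) : ℝ)) ^ 2 :=
        le_trans (le_abs_self _) (abs_hamiltonian_le φ)
      have h2 := mul_le_mul_of_nonneg_left h1 hβ
      linarith
    have hmono := integral_mono (integrable_const _) hint hlow
    have hconst : (∫ _φ : SpinCfg d L N,
        Real.exp (-(β * ((Fintype.card (TorusPt d L) : ℝ)) ^ 2)) ∂(spinMeasure d L N)) =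
        Real.exp (-(β * ((Fintype.card (TorusPt d L) : ℝ)) ^ 2)) := by
      rw [integral_const, probReal_univ]
      simp
    calc (0:ℝ) < Real.exp (-(β * ((Fintype.card (TorusPt d L) : ℝ)) ^ 2)) := Real.exp_pos _
      _ = _ := hconst.symm
      _ ≤ _ := hmono
  -- the difference spins
  set G : Fin N → SpinCfg d L N → ℝ := (fun k φ =>
    (φ (torusOrigin d L) : EuclideanSpace ℝ (Fin N)) k -
      (φ wpt : EuclideanSpace ℝ (Fin N)) k) with hGdef
  have hGm : ∀ k, Measurable (G k) := by
    intro k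
    simp only [hGdef]
    exact (measurable_coordk (torusOrigin d L) k).sub (measurable_coordk wpt k)
  have hGb : ∀ k φ, |G k φ| ≤ 2 := by
    intro k φ
    simp only [hGdef]
    have h1 := coord_abs_le (φ (torusOrigin d L)) k
    have h2 := coord_abs_le (φ wpt) k
    calc |(φ (torusOrigin d L) : EuclideanSpace ℝ (Fin N)) k -
          (φ wpt : EuclideanSpace ℝ (Fin N)) k|
        ≤ |(φ (torusOrigin d L) : EuclideanSpace ℝ (Fin N)) k| +
          |(φ wpt : EuclideanSpace ℝ (Fin N)) k| := abs_sub _ _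
      _ ≤ 2 := by linarith
  -- reflection positivity for each component
  have hRP : ∀ k : Fin N, 0 ≤ ∫ φ, G k φ * G k (fun x => φ (reflPt (z i) i x)) *
      Real.exp (-β * hamiltonian φ) ∂(spinMeasure d L N) := by
    intro k
    refine reflection_positivity hL2 hP hβ (z i) i (G k) (hGm k)
      (M := 2) (by norm_num) (hGb k) ?_
    intro φ ψ h
    simp only [hGdef]
    rw [h (torusOrigin d L) (by rw [hoi]; exact RPAux.cp_zero (z i)),
      h wpt (by rw [hwi]; exact RPAux.cp_zero (z i))]
  -- integrability of each component
  have hGint : ∀ k : Fin N, Integrable (fun φ : SpinCfg d L N =>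
      G k φ * G k (fun x => φ (reflPt (z i) i x)) * Real.exp (-β * hamiltonian φ))
      (spinMeasure d L N) := by
    intro k
    refine integrable_bdd ((((hGm k).mul ((hGm k).comp
        (measurable_comp_perm (reflPerm (z i) i)))).mul hexpm)).aestronglyMeasurable
      (C := 2 * 2 * Real.exp (β * ((Fintype.card (TorusPt d L) : ℝ)) ^ 2)) (fun φ => ?_)
    rw [abs_mul, abs_mul, Real.abs_exp]
    refine mul_le_mul (mul_le_mul (hGb k φ) (hGb k (fun x => φ (reflPt (z i) i x)))
        (abs_nonneg _) (by norm_num))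
      (exp_negmul_le hβ (abs_hamiltonian_le φ)) (Real.exp_pos _).le (by norm_num)
  -- summing over components
  have hsum0 : 0 ≤ ∫ φ, (∑ k : Fin N, G k φ * G k (fun x => φ (reflPt (z i) i x))) *
      Real.exp (-β * hamiltonian φ) ∂(spinMeasure d L N) := by
    have heq : (fun φ : SpinCfg d L N =>
        (∑ k : Fin N, G k φ * G k (fun x => φ (reflPt (z i) i x))) *
          Real.exp (-β * hamiltonian φ)) =
        fun φ => ∑ k : Fin N, G k φ * G k (fun x => φ (reflPt (z i) i x)) *
          Real.exp (-β * hamiltonian φ) := by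
      funext φ
      rw [Finset.sum_mul]
    rw [heq, integral_finset_sum _ (fun k _ => hGint k)]
    exact Finset.sum_nonneg fun k _ => hRP k
  -- pointwise expansion of the sum
  have hptwise : ∀ φ : SpinCfg d L N,
      (∑ k : Fin N, G k φ * G k (fun x => φ (reflPt (z i) i x))) =
      (⟪(φ (torusOrigin d L) : EuclideanSpace ℝ (Fin N)),
          (φ (reflPt (z i) i (torusOrigin d L)) : EuclideanSpace ℝ (Fin N))⟫ : ℝ)
      - ⟪(φ (torusOrigin d L) : EuclideanSpace ℝ (Fin N)),
          (φ (reflPt (z i) i wpt) : EuclideanSpace ℝ (Fin N))⟫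
      - ⟪(φ wpt : EuclideanSpace ℝ (Fin N)),
          (φ (reflPt (z i) i (torusOrigin d L)) : EuclideanSpace ℝ (Fin N))⟫
      + ⟪(φ wpt : EuclideanSpace ℝ (Fin N)),
          (φ (reflPt (z i) i wpt) : EuclideanSpace ℝ (Fin N))⟫ := by
    intro φ
    rw [inner_coords, inner_coords, inner_coords, inner_coords,
      ← Finset.sum_sub_distrib, ← Finset.sum_sub_distrib, ← Finset.sum_add_distrib]
    refine Finset.sum_congr rfl fun k _ => ?_
    simp only [hGdef]
    ring
  -- split the integral into four correlation integrals
  have hsplit : (fun φ : SpinCfg d L N =>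
      (∑ k : Fin N, G k φ * G k (fun x => φ (reflPt (z i) i x))) *
        Real.exp (-β * hamiltonian φ)) =
      fun φ => (⟪(φ (torusOrigin d L) : EuclideanSpace ℝ (Fin N)), (φ (fun k => if k = i then z i else 0) : EuclideanSpace ℝ (Fin N))⟫ : ℝ) * Real.exp (-β * hamiltonian φ) - (⟪(φ (torusOrigin d L) : EuclideanSpace ℝ (Fin N)), (φ z : EuclideanSpace ℝ (Fin N))⟫ : ℝ) * Real.exp (-β * hamiltonian φ) - (⟪(φ wpt : EuclideanSpace ℝ (Fin N)), (φ (fun k => if k = i then z i else 0) : EuclideanSpace ℝ (Fin N))⟫ : ℝ) * Real.exp (-β * hamiltonian φ) + (⟪(φ wpt : EuclideanSpace ℝ (Fin N)), (φ z : EuclideanSpace ℝ (Fin N))⟫ : ℝ) * Real.exp (-β * hamiltonian φ) := by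
    funext φ
    rw [hptwise φ, hθo, hθw]
    ring
  rw [hsplit] at hsum0
  have h1 : Integrable (fun φ : SpinCfg d L N => (⟪(φ (torusOrigin d L) : EuclideanSpace ℝ (Fin N)), (φ (fun k => if k = i then z i else 0) : EuclideanSpace ℝ (Fin N))⟫ : ℝ) * Real.exp (-β * hamiltonian φ) - (⟪(φ (torusOrigin d L) : EuclideanSpace ℝ (Fin N)), (φ z : EuclideanSpace ℝ (Fin N))⟫ : ℝ) * Real.exp (-β * hamiltonian φ)) (spinMeasure d L N) :=
    (hIint _ _).sub (hIint _ _)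
  have h2 : Integrable (fun φ : SpinCfg d L N => (⟪(φ (torusOrigin d L) : EuclideanSpace ℝ (Fin N)), (φ (fun k => if k = i then z i else 0) : EuclideanSpace ℝ (Fin N))⟫ : ℝ) * Real.exp (-β * hamiltonian φ) - (⟪(φ (torusOrigin d L) : EuclideanSpace ℝ (Fin N)), (φ z : EuclideanSpace ℝ (Fin N))⟫ : ℝ) * Real.exp (-β * hamiltonian φ) - (⟪(φ wpt : EuclideanSpace ℝ (Fin N)), (φ (fun k => if k = i then z i else 0) : EuclideanSpace ℝ (Fin N))⟫ : ℝ) * Real.exp (-β * hamiltonian φ)) (spinMeasure d L N) :=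
    h1.sub (hIint _ _)
  have e3 : (∫ φ, ((⟪(φ (torusOrigin d L) : EuclideanSpace ℝ (Fin N)), (φ (fun k => if k = i then z i else 0) : EuclideanSpace ℝ (Fin N))⟫ : ℝ) * Real.exp (-β * hamiltonian φ) - (⟪(φ (torusOrigin d L) : EuclideanSpace ℝ (Fin N)), (φ z : EuclideanSpace ℝ (Fin N))⟫ : ℝ) * Real.exp (-β * hamiltonian φ) - (⟪(φ wpt : EuclideanSpace ℝ (Fin N)), (φ (fun k => if k = i then z i else 0) : EuclideanSpace ℝ (Fin N))⟫ : ℝ) * Real.exp (-β * hamiltonian φ) + (⟪(φ wpt : EuclideanSpace ℝ (Fin N)), (φ z : EuclideanSpace ℝ (Fin N))⟫ : ℝ) * Real.exp (-β * hamiltonian φ)) ∂(spinMeasure d L N)) =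
      (∫ φ, ((⟪(φ (torusOrigin d L) : EuclideanSpace ℝ (Fin N)), (φ (fun k => if k = i then z i else 0) : EuclideanSpace ℝ (Fin N))⟫ : ℝ) * Real.exp (-β * hamiltonian φ) - (⟪(φ (torusOrigin d L) : EuclideanSpace ℝ (Fin N)), (φ z : EuclideanSpace ℝ (Fin N))⟫ : ℝ) * Real.exp (-β * hamiltonian φ) - (⟪(φ wpt : EuclideanSpace ℝ (Fin N)), (φ (fun k => if k = i then z i else 0) : EuclideanSpace ℝ (Fin N))⟫ : ℝ) * Real.exp (-β * hamiltonian φ)) ∂(spinMeasure d L N)) + ∫ φ, (⟪(φ wpt : EuclideanSpace ℝ (Fin N)), (φ z : EuclideanSpace ℝ (Fin N))⟫ : ℝ) * Real.exp (-β * hamiltonian φ) ∂(spinMeasure d L N) :=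
    integral_add h2 (hIint _ _)
  have e2 : (∫ φ, ((⟪(φ (torusOrigin d L) : EuclideanSpace ℝ (Fin N)), (φ (fun k => if k = i then z i else 0) : EuclideanSpace ℝ (Fin N))⟫ : ℝ) * Real.exp (-β * hamiltonian φ) - (⟪(φ (torusOrigin d L) : EuclideanSpace ℝ (Fin N)), (φ z : EuclideanSpace ℝ (Fin N))⟫ : ℝ) * Real.exp (-β * hamiltonian φ) - (⟪(φ wpt : EuclideanSpace ℝ (Fin N)), (φ (fun k => if k = i then z i else 0) : EuclideanSpace ℝ (Fin N))⟫ : ℝ) * Real.exp (-β * hamiltonian φ)) ∂(spinMeasure d L N)) =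
      (∫ φ, ((⟪(φ (torusOrigin d L) : EuclideanSpace ℝ (Fin N)), (φ (fun k => if k = i then z i else 0) : EuclideanSpace ℝ (Fin N))⟫ : ℝ) * Real.exp (-β * hamiltonian φ) - (⟪(φ (torusOrigin d L) : EuclideanSpace ℝ (Fin N)), (φ z : EuclideanSpace ℝ (Fin N))⟫ : ℝ) * Real.exp (-β * hamiltonian φ)) ∂(spinMeasure d L N)) - ∫ φ, (⟪(φ wpt : EuclideanSpace ℝ (Fin N)), (φ (fun k => if k = i then z i else 0) : EuclideanSpace ℝ (Fin N))⟫ : ℝ) * Real.exp (-β * hamiltonian φ) ∂(spinMeasure d L N) :=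
    integral_sub h1 (hIint _ _)
  have e1 : (∫ φ, ((⟪(φ (torusOrigin d L) : EuclideanSpace ℝ (Fin N)), (φ (fun k => if k = i then z i else 0) : EuclideanSpace ℝ (Fin N))⟫ : ℝ) * Real.exp (-β * hamiltonian φ) - (⟪(φ (torusOrigin d L) : EuclideanSpace ℝ (Fin N)), (φ z : EuclideanSpace ℝ (Fin N))⟫ : ℝ) * Real.exp (-β * hamiltonian φ)) ∂(spinMeasure d L N)) =
      (∫ φ, (⟪(φ (torusOrigin d L) : EuclideanSpace ℝ (Fin N)), (φ (fun k => if k = i then z i else 0) : EuclideanSpace ℝ (Fin N))⟫ : ℝ) * Real.exp (-β * hamiltonian φ) ∂(spinMeasure d L N)) - ∫ φ, (⟪(φ (torusOrigin d L) : EuclideanSpace ℝ (Fin N)), (φ z : EuclideanSpace ℝ (Fin N))⟫ : ℝ) * Real.exp (-β * hamiltonian φ) ∂(spinMeasure d L N) :=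
    integral_sub (hIint _ _) (hIint _ _)
  rw [e3, e2, e1] at hsum0
  -- identify the mixed term with the main correlation
  have hmix : (∫ φ, (⟪(φ wpt : EuclideanSpace ℝ (Fin N)), (φ (fun k => if k = i then z i else 0) : EuclideanSpace ℝ (Fin N))⟫ : ℝ) * Real.exp (-β * hamiltonian φ) ∂(spinMeasure d L N)) = ∫ φ, (⟪(φ (torusOrigin d L) : EuclideanSpace ℝ (Fin N)), (φ z : EuclideanSpace ℝ (Fin N))⟫ : ℝ) * Real.exp (-β * hamiltonian φ) ∂(spinMeasure d L N) := by
    have hcomp := integral_inner_exp_comp hP β (reflPerm (z i) i)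
      (fun x y => torusAdj_refl_iff (z i) i) wpt (fun k => if k = i then z i else 0)
    simp only [reflPerm_apply] at hcomp
    rw [hθw, hθz''] at hcomp
    rw [← hcomp]
    refine integral_congr_ae (Filter.Eventually.of_forall fun φ => ?_)
    show (⟪(φ z : EuclideanSpace ℝ (Fin N)),
        (φ (torusOrigin d L) : EuclideanSpace ℝ (Fin N))⟫ : ℝ) * Real.exp (-β * hamiltonian φ) =
      (⟪(φ (torusOrigin d L) : EuclideanSpace ℝ (Fin N)),
        (φ z : EuclideanSpace ℝ (Fin N))⟫ : ℝ) * Real.exp (-β * hamiltonian φ)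
    rw [real_inner_comm]
  -- identify the last term via translation invariance
  have htrans : (∫ φ, (⟪(φ wpt : EuclideanSpace ℝ (Fin N)), (φ z : EuclideanSpace ℝ (Fin N))⟫ : ℝ) * Real.exp (-β * hamiltonian φ) ∂(spinMeasure d L N)) = ∫ φ, (⟪(φ (torusOrigin d L) : EuclideanSpace ℝ (Fin N)), (φ (fun k => if k = i then z i else 0) : EuclideanSpace ℝ (Fin N))⟫ : ℝ) * Real.exp (-β * hamiltonian φ) ∂(spinMeasure d L N) := by
    have headd : ∀ x y : TorusPt d L, torusAdj (Equiv.addRight wpt x) (Equiv.addRight wpt y) ↔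
        torusAdj x y := by
      intro x y
      simp only [Equiv.coe_addRight]
      constructor
      · intro h
        have h2 := torusAdj_add (-wpt) h
        simpa using h2
      · exact torusAdj_add wpt
    have hcomp := integral_inner_exp_comp hP β (Equiv.addRight wpt) headd
      (torusOrigin d L) (fun k => if k = i then z i else 0)
    simp only [Equiv.coe_addRight] at hcomp
    rw [how, hzw] at hcomp
    exact hcomp
  rw [hmix, htrans] at hsum0
  -- conclude
  unfold corrDot gibbsExp
  refine mul_le_mul_of_nonneg_left ?_ (inv_nonneg.mpr hZpos.le)
  linarith
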